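/- arXiv:2004.14809 — 7 statements merged into one kernel-verified Lean document; each statement's English description precedes it below -/
import Mathlib

section
/- Let H be a connected k-uniform hypergraph with at least one edge and signless Laplacian eigenpair (ρ, x), and let Z(H) = ∑_{v∈V} d(v)² be its Zagreb index. Then x_max ≥ ρ/(k·√(Z(H))), and equality holds if and only if H is regular. -/
open Finset Matrix

variable {V : Type*} [Fintype V] [DecidableEq V]

/-- The incidence matrix of a hypergraph with vertex type `V` and edge set `E`:
`B(v,e) = 1` if `v ∈ e` and `0` otherwise. -/
def inc (E : Finset (Finset V)) : Matrix V ↥E ℝ :=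
  fun v e => if v ∈ (e : Finset V) then 1 else 0

/-- The signless Laplacian matrix `Q = B * Bᵀ`. -/
def signlessLap (E : Finset (Finset V)) : Matrix V V ℝ :=
  inc E * (inc E)ᵀ

/-- The degree of a vertex: the number of edges containing it. -/
def deg (E : Finset (Finset V)) (v : V) : ℕ :=
  (E.filter fun e => v ∈ e).card

/-- A hypergraph is connected if the reflexive-transitive closure of the relation
"`u ≠ v` and some edge contains both `u` and `v`" relates every pair of vertices. -/
def HConnected (E : Finset (Finset V)) : Prop :=
  ∀ u v : V, Relation.ReflTransGen (fun a b => a ≠ b ∧ ∃ e ∈ E, a ∈ e ∧ b ∈ e) u v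

/-- A hypergraph is regular if all vertices have the same degree. -/
def HRegular (E : Finset (Finset V)) : Prop :=
  ∃ r, ∀ v : V, deg E v = r

/-- A signless Laplacian eigenpair `(ρ, x)`: `x` is entrywise positive,
normalized by `∑ v, x v ^ 2 = 1`, and `Q x = ρ x`. -/
def Eigenpair (E : Finset (Finset V)) (ρ : ℝ) (x : V → ℝ) : Prop :=
  (∀ v, 0 < x v) ∧ (∑ v, x v ^ 2 = 1) ∧ (signlessLap E).mulVec x = ρ • x

/-- Edge sum of a vector. -/
def eS (E : Finset (Finset V)) (x : V → ℝ) (e : ↥E) : ℝ := ∑ u ∈ (e : Finset V), x u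

lemma lap_mulVec (E : Finset (Finset V)) (x : V → ℝ) (v : V) :
    (signlessLap E).mulVec x v = ∑ e : ↥E, if v ∈ (e : Finset V) then eS E x e else 0 := by
  rw [signlessLap, ← Matrix.mulVec_mulVec]
  simp only [Matrix.mulVec, dotProduct, inc, Matrix.transpose_apply, ite_mul, one_mul,
    zero_mul]
  refine Finset.sum_congr rfl fun e _ => ?_
  rw [Finset.sum_ite_mem, Finset.univ_inter]
  rfl

lemma count_edges (E : Finset (Finset V)) (v : V) :
    ∑ e : ↥E, (if v ∈ (e : Finset V) then (1:ℝ) else 0) = (deg E v : ℝ) := by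
  rw [Finset.sum_coe_sort E (fun e => if v ∈ e then (1:ℝ) else 0)]
  simp [deg, Finset.sum_boole]

lemma forall_eq_of_sum_eq (s : Finset V) (x : V → ℝ) (M : ℝ) (hle : ∀ w ∈ s, x w ≤ M)
    (hsum : (s.card : ℝ) * M ≤ ∑ u ∈ s, x u) : ∀ w ∈ s, x w = M := by
  have h0 : ∑ u ∈ s, (M - x u) ≤ 0 := by
    rw [Finset.sum_sub_distrib, Finset.sum_const, nsmul_eq_mul]; linarith
  have h1 : ∑ u ∈ s, (M - x u) = 0 :=
    le_antisymm h0 (Finset.sum_nonneg fun u hu => by linarith [hle u hu])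
  intro w hw
  have := (Finset.sum_eq_zero_iff_of_nonneg (fun u hu => by linarith [hle u hu])).mp h1 w hw
  linarith

/-- For a connected `k`-graph with at least one edge, signless Laplacian eigenpair
`(ρ, x)` and Zagreb index `Z = ∑ v, d(v)^2`:
`x_max ≥ ρ / (k * √Z)`, with equality iff `H` is regular. -/
theorem xmax_ge_rho_div_k_sqrt_zagreb {V : Type*} [Fintype V] [DecidableEq V] (k : ℕ)
    (hk : 2 ≤ k) (E : Finset (Finset V)) (hunif : ∀ e ∈ E, e.card = k)
    (hconn : HConnected E) (hE : E.Nonempty)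
    (ρ : ℝ) (x : V → ℝ) (hx : Eigenpair E ρ x)
    (xmax : ℝ) (hmax : IsGreatest (Set.range x) xmax) :
    ρ / (k * Real.sqrt (∑ v, (deg E v : ℝ) ^ 2)) ≤ xmax ∧
      (xmax = ρ / (k * Real.sqrt (∑ v, (deg E v : ℝ) ^ 2)) ↔ HRegular E) := by
  obtain ⟨hpos, hnorm, heig⟩ := hx
  obtain ⟨v₀, hv₀⟩ := hmax.1
  have hle : ∀ v, x v ≤ xmax := fun v => hmax.2 ⟨v, rfl⟩
  have hxmaxpos : 0 < xmax := hv₀ ▸ hpos v₀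
  obtain ⟨e₀, he₀⟩ := hE
  have he₀ne : (e₀ : Finset V).Nonempty := by
    rw [← Finset.card_pos, hunif e₀ he₀]; omega
  obtain ⟨u₀, hu₀⟩ := he₀ne
  have hkpos : (0:ℝ) < (k:ℝ) := by exact_mod_cast Nat.lt_of_lt_of_le Nat.zero_lt_two hk
  have hmem : ∀ v, ∃ e ∈ E, v ∈ e := by
    intro v
    rcases (hconn v u₀).cases_head with h | ⟨c, ⟨hne, e, heE, hve, _⟩, _⟩
    · exact ⟨e₀, he₀, h ▸ hu₀⟩
    · exact ⟨e, heE, hve⟩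
  have hdegpos : ∀ v, 1 ≤ deg E v := by
    intro v; obtain ⟨e, he, hv⟩ := hmem v
    exact Finset.card_pos.mpr ⟨e, Finset.mem_filter.mpr ⟨he, hv⟩⟩
  set Z := ∑ v, (deg E v : ℝ)^2 with hZdef
  have hZpos : 0 < Z := by
    refine Finset.sum_pos (fun v _ => ?_) ⟨u₀, Finset.mem_univ u₀⟩
    have : (1:ℝ) ≤ (deg E v : ℝ) := by exact_mod_cast hdegpos v
    positivity
  have hsqrtZ : 0 < Real.sqrt Z := Real.sqrt_pos.mpr hZpos
  have hkZ : 0 < (k:ℝ) * Real.sqrt Z := mul_pos hkpos hsqrtZ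
  have key : ∀ v, ρ * x v = ∑ e : ↥E, if v ∈ (e : Finset V) then eS E x e else 0 := by
    intro v
    have h := congrFun heig v
    rw [lap_mulVec] at h
    simpa [Pi.smul_apply, smul_eq_mul] using h.symm
  have hScard : ∀ e : ↥E, ((e : Finset V)).card = k := fun e => hunif e e.2
  have hSpos : ∀ e : ↥E, 0 < eS E x e := fun e =>
    Finset.sum_pos (fun u _ => hpos u) (by rw [← Finset.card_pos, hScard e]; omega)
  have hSle : ∀ e : ↥E, eS E x e ≤ k * xmax := by
    intro e
    calc eS E x e ≤ (e : Finset V).card • xmax :=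
          Finset.sum_le_card_nsmul _ _ _ (fun u _ => hle u)
      _ = k * xmax := by rw [hScard e, nsmul_eq_mul]
  have hdouble : ∑ e : ↥E, eS E x e = ∑ v, (deg E v : ℝ) * x v := by
    have h1 : ∀ e : ↥E, eS E x e = ∑ v : V, (if v ∈ (e : Finset V) then (1:ℝ) else 0) * x v := by
      intro e
      simp only [ite_mul, one_mul, zero_mul, Finset.sum_ite_mem, Finset.univ_inter, eS]
    calc ∑ e : ↥E, eS E x e
        = ∑ e : ↥E, ∑ v : V, (if v ∈ (e : Finset V) then (1:ℝ) else 0) * x v :=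
          Finset.sum_congr rfl fun e _ => h1 e
      _ = ∑ v : V, (∑ e : ↥E, (if v ∈ (e : Finset V) then (1:ℝ) else 0)) * x v := by
          rw [Finset.sum_comm]
          exact Finset.sum_congr rfl fun v _ => (Finset.sum_mul _ _ _).symm
      _ = ∑ v, (deg E v : ℝ) * x v := by
          exact Finset.sum_congr rfl fun v _ => by rw [count_edges]
  have hrho : ρ = ∑ e : ↥E, eS E x e ^ 2 := by
    have h0 : ρ = ∑ v, x v * (ρ * x v) := by
      have h : ∑ v, x v * (ρ * x v) = ρ * ∑ v, x v ^ 2 := by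
        rw [Finset.mul_sum]; exact Finset.sum_congr rfl fun v _ => by ring
      rw [h, hnorm, mul_one]
    rw [h0]
    calc ∑ v, x v * (ρ * x v)
        = ∑ v, ∑ e : ↥E, (if v ∈ (e : Finset V) then x v * eS E x e else 0) := by
          refine Finset.sum_congr rfl fun v _ => ?_
          rw [key v, Finset.mul_sum]
          exact Finset.sum_congr rfl fun e _ => by split <;> simp
      _ = ∑ e : ↥E, ∑ v, (if v ∈ (e : Finset V) then x v * eS E x e else 0) := Finset.sum_comm
      _ = ∑ e : ↥E, eS E x e ^ 2 := by
          refine Finset.sum_congr rfl fun e _ => ?_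
          rw [Finset.sum_ite_mem, Finset.univ_inter, ← Finset.sum_mul]
          rw [show ∑ u ∈ (e : Finset V), x u = eS E x e from rfl, sq]
  have hCS : ∑ v, (deg E v : ℝ) * x v ≤ Real.sqrt Z := by
    have h2 := Finset.sum_mul_sq_le_sq_mul_sq Finset.univ (fun v => (deg E v : ℝ)) x
    have hnn : 0 ≤ ∑ v, (deg E v : ℝ) * x v :=
      Finset.sum_nonneg fun v _ => mul_nonneg (Nat.cast_nonneg _) (hpos v).le
    have h3 : (∑ v, (deg E v : ℝ) * x v)^2 ≤ Z := by
      calc (∑ v, (deg E v : ℝ) * x v)^2 ≤ (∑ v, (deg E v : ℝ)^2) * ∑ v, x v ^ 2 := h2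
        _ = Z := by rw [hnorm, mul_one]
    calc ∑ v, (deg E v : ℝ) * x v = Real.sqrt ((∑ v, (deg E v : ℝ) * x v)^2) :=
          (Real.sqrt_sq hnn).symm
      _ ≤ Real.sqrt Z := Real.sqrt_le_sqrt h3
  have hsumS_le : ∑ e : ↥E, eS E x e ≤ Real.sqrt Z := hdouble ▸ hCS
  have hstep : ∑ e : ↥E, eS E x e ^ 2 ≤ ((k:ℝ) * xmax) * ∑ e : ↥E, eS E x e := by
    rw [Finset.mul_sum]
    exact Finset.sum_le_sum fun e _ => by
      rw [sq]; exact mul_le_mul_of_nonneg_right (hSle e) (hSpos e).le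
  have hmain : ρ ≤ xmax * ((k:ℝ) * Real.sqrt Z) := by
    calc ρ = ∑ e : ↥E, eS E x e ^ 2 := hrho
      _ ≤ ((k:ℝ) * xmax) * ∑ e : ↥E, eS E x e := hstep
      _ ≤ ((k:ℝ) * xmax) * Real.sqrt Z :=
          mul_le_mul_of_nonneg_left hsumS_le (by positivity)
      _ = xmax * ((k:ℝ) * Real.sqrt Z) := by ring
  refine ⟨by rw [div_le_iff₀ hkZ]; exact hmain, ?_, ?_⟩
  · -- equality → regular
    intro heq
    have hrhoeq : ρ = xmax * ((k:ℝ) * Real.sqrt Z) := by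
      rw [eq_div_iff hkZ.ne'] at heq; linarith
    have h3 : ∑ e : ↥E, eS E x e ^ 2 = ((k:ℝ) * xmax) * ∑ e : ↥E, eS E x e := by
      have hB : ((k:ℝ)*xmax) * ∑ e : ↥E, eS E x e ≤ ((k:ℝ)*xmax) * Real.sqrt Z :=
        mul_le_mul_of_nonneg_left hsumS_le (by positivity)
      nlinarith [hstep, hrho]
    have hSall : ∀ e : ↥E, eS E x e = (k:ℝ) * xmax := by
      have hz : ∑ e : ↥E, (((k:ℝ)*xmax) * eS E x e - eS E x e ^ 2) = 0 := by
        rw [Finset.sum_sub_distrib, ← Finset.mul_sum, h3]; ring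
      intro e
      have hterm := (Finset.sum_eq_zero_iff_of_nonneg (fun e' _ => by
        nlinarith [hSle e', hSpos e'])).mp hz e (Finset.mem_univ e)
      have h4 : eS E x e * ((k:ℝ)*xmax - eS E x e) = 0 := by linear_combination hterm
      rcases mul_eq_zero.mp h4 with h | h
      · exact absurd h (hSpos e).ne'
      · linarith
    have hxconst : ∀ v, x v = xmax := by
      intro v
      obtain ⟨e, heE, hve⟩ := hmem v
      refine forall_eq_of_sum_eq e x xmax (fun w _ => hle w) ?_ v hve
      have h := hSall ⟨e, heE⟩
      rw [show eS E x ⟨e, heE⟩ = ∑ u ∈ e, x u from rfl] at h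
      rw [hunif e heE, h]
    have hdeg : ∀ v, ρ * xmax = (deg E v : ℝ) * ((k:ℝ) * xmax) := by
      intro v
      have h5 := key v
      rw [hxconst v] at h5
      have h6 : ∀ e : ↥E, (if v ∈ (e : Finset V) then eS E x e else 0)
          = (if v ∈ (e : Finset V) then (1:ℝ) else 0) * ((k:ℝ) * xmax) := by
        intro e
        split
        · rw [one_mul]; exact hSall e
        · rw [zero_mul]
      rw [Finset.sum_congr rfl (fun e _ => h6 e), ← Finset.sum_mul, count_edges] at h5
      exact h5
    refine ⟨deg E u₀, fun v => ?_⟩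
    have h7 : (deg E v : ℝ) * ((k:ℝ) * xmax) = (deg E u₀ : ℝ) * ((k:ℝ) * xmax) := by
      rw [← hdeg v, ← hdeg u₀]
    have := mul_right_cancel₀ (by positivity : ((k:ℝ) * xmax) ≠ 0) h7
    exact_mod_cast this
  · -- regular → equality
    rintro ⟨r, hr⟩
    have hrpos : 1 ≤ r := hr u₀ ▸ hdegpos u₀
    have hrR : (0:ℝ) < (r:ℝ) := by exact_mod_cast hrpos
    have hcount : ∀ v, ∑ e : ↥E, (if v ∈ (e : Finset V) then (1:ℝ) else 0) = (r:ℝ) := by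
      intro v; rw [count_edges, hr v]
    have hsum_kx : ∀ v, ∑ e : ↥E, (if v ∈ (e : Finset V) then (k:ℝ)*xmax else 0)
        = (r:ℝ) * ((k:ℝ)*xmax) := by
      intro v
      rw [show (∑ e : ↥E, if v ∈ (e : Finset V) then (k:ℝ)*xmax else 0)
          = ∑ e : ↥E, (if v ∈ (e : Finset V) then (1:ℝ) else 0) * ((k:ℝ)*xmax) from
        Finset.sum_congr rfl fun e _ => by split <;> ring, ← Finset.sum_mul, hcount v]
    have hub : ρ * xmax ≤ (k:ℝ) * r * xmax := by
      calc ρ * xmax = ∑ e : ↥E, (if v₀ ∈ (e : Finset V) then eS E x e else 0) := by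
            rw [← hv₀]; exact key v₀
        _ ≤ ∑ e : ↥E, (if v₀ ∈ (e : Finset V) then (k:ℝ)*xmax else 0) := by
            refine Finset.sum_le_sum fun e _ => ?_
            split
            · exact hSle e
            · exact le_refl 0
        _ = (r:ℝ) * ((k:ℝ)*xmax) := hsum_kx v₀
        _ = (k:ℝ) * r * xmax := by ring
    have hρ_le : ρ ≤ (k:ℝ) * r := by
      have := (mul_le_mul_iff_of_pos_right hxmaxpos).mp hub
      linarith [this]
    obtain ⟨v₁, -, hv₁⟩ := Finset.exists_min_image Finset.univ x ⟨v₀, Finset.mem_univ v₀⟩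
    have hS_ge : ∀ e : ↥E, (k:ℝ) * x v₁ ≤ eS E x e := by
      intro e
      calc (k:ℝ) * x v₁ = (e : Finset V).card • x v₁ := by rw [hScard e, nsmul_eq_mul]
        _ ≤ eS E x e := Finset.card_nsmul_le_sum _ _ _ (fun u _ => hv₁ u (Finset.mem_univ u))
    have hsum_kx1 : ∀ v, ∑ e : ↥E, (if v ∈ (e : Finset V) then (k:ℝ)*x v₁ else 0)
        = (r:ℝ) * ((k:ℝ)*x v₁) := by
      intro v
      rw [show (∑ e : ↥E, if v ∈ (e : Finset V) then (k:ℝ)*x v₁ else 0)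
          = ∑ e : ↥E, (if v ∈ (e : Finset V) then (1:ℝ) else 0) * ((k:ℝ)*x v₁) from
        Finset.sum_congr rfl fun e _ => by split <;> ring, ← Finset.sum_mul, hcount v]
    have hlb : (k:ℝ) * r * x v₁ ≤ ρ * x v₁ := by
      calc (k:ℝ) * r * x v₁ = (r:ℝ) * ((k:ℝ)*x v₁) := by ring
        _ = ∑ e : ↥E, (if v₁ ∈ (e : Finset V) then (k:ℝ)*x v₁ else 0) := (hsum_kx1 v₁).symm
        _ ≤ ∑ e : ↥E, (if v₁ ∈ (e : Finset V) then eS E x e else 0) := by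
            refine Finset.sum_le_sum fun e _ => ?_
            split
            · exact hS_ge e
            · exact le_refl 0
        _ = ρ * x v₁ := (key v₁).symm
    have hρ : ρ = (k:ℝ) * r := by
      have hx1 : 0 < x v₁ := hpos v₁
      have := (mul_le_mul_iff_of_pos_right hx1).mp hlb
      linarith
    -- propagation: x is constant
    have hstepmax : ∀ v, x v = xmax → ∀ e ∈ E, v ∈ e → ∀ w ∈ e, x w = xmax := by
      intro v hv e heE hve
      have h6 : ∑ e' : ↥E, (if v ∈ (e' : Finset V) then eS E x e' else 0) = ρ * xmax := by
        rw [← hv]; exact (key v).symm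
      have h7 : ∑ e' : ↥E, ((if v ∈ (e' : Finset V) then (k:ℝ)*xmax else 0)
          - (if v ∈ (e' : Finset V) then eS E x e' else 0)) = 0 := by
        rw [Finset.sum_sub_distrib, h6, hsum_kx v, hρ]; ring
      have h8 := (Finset.sum_eq_zero_iff_of_nonneg (fun e' _ => by
        split
        · simp only [sub_nonneg]; exact hSle e'
        · simp)).mp h7 ⟨e, heE⟩ (Finset.mem_univ _)
      rw [if_pos (show v ∈ ((⟨e, heE⟩ : ↥E) : Finset V) from hve),
        if_pos (show v ∈ ((⟨e, heE⟩ : ↥E) : Finset V) from hve)] at h8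
      have h9 : eS E x ⟨e, heE⟩ = (k:ℝ)*xmax := by linarith
      refine forall_eq_of_sum_eq e x xmax (fun w _ => hle w) ?_
      rw [show eS E x ⟨e, heE⟩ = ∑ u ∈ e, x u from rfl] at h9
      rw [hunif e heE, h9]
    have hxconst : ∀ v, x v = xmax := by
      intro v
      induction hconn v₀ v with
      | refl => exact hv₀
      | tail _ hbc ih =>
        obtain ⟨-, e, heE, hbe, hce⟩ := hbc
        exact hstepmax _ ih e heE hbe _ hce
    have hVne : Nonempty V := ⟨u₀⟩
    have hn : (0:ℝ) < (Fintype.card V : ℝ) := by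
      exact_mod_cast Fintype.card_pos
    have hone : (Fintype.card V : ℝ) * xmax ^ 2 = 1 := by
      rw [← hnorm, Finset.sum_congr rfl fun v _ => by rw [hxconst v]]
      simp [Finset.card_univ, mul_comm]
    have hZval : Z = (Fintype.card V : ℝ) * (r:ℝ)^2 := by
      rw [hZdef, Finset.sum_congr rfl fun v _ => by rw [hr v]]
      simp [Finset.card_univ, mul_comm]
    have hsqZ : Real.sqrt Z = Real.sqrt (Fintype.card V) * (r:ℝ) := by
      rw [hZval, Real.sqrt_mul hn.le, Real.sqrt_sq (by positivity : (0:ℝ) ≤ (r:ℝ))]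
    have hxn : xmax * Real.sqrt (Fintype.card V) = 1 := by
      have hsq : (xmax * Real.sqrt (Fintype.card V))^2 = 1 := by
        rw [mul_pow, Real.sq_sqrt hn.le]; linarith [hone]
      have hp : 0 < xmax * Real.sqrt (Fintype.card V) :=
        mul_pos hxmaxpos (Real.sqrt_pos.mpr hn)
      calc xmax * Real.sqrt (Fintype.card V)
          = Real.sqrt ((xmax * Real.sqrt (Fintype.card V))^2) := (Real.sqrt_sq hp.le).symm
        _ = 1 := by rw [hsq, Real.sqrt_one]
    rw [eq_div_iff hkZ.ne', hρ, hsqZ]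
    linear_combination ((k:ℝ) * (r:ℝ)) * hxn
end

section
/- Let H be a connected k-uniform hypergraph with n vertices, m edges, maximum degree Δ, and signless Laplacian eigenpair (ρ, x). Then (knΔ − k²m)·x_min ≤ (kΔ − ρ)·√n, and equality holds if and only if H is regular. -/
open Finset Matrix

variable {V : Type*} [Fintype V] [DecidableEq V]

lemma rowSum_signlessLap (k : ℕ) (E : Finset (Finset V)) (hunif : ∀ e ∈ E, e.card = k)
    (v : V) : ∑ u, signlessLap E v u = (k : ℝ) * deg E v := by
  unfold signlessLap deg
  simp only [Matrix.mul_apply, Matrix.transpose_apply, inc]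
  rw [Finset.sum_comm]
  have h1 : ∀ e : ↥E, ∑ u, (if v ∈ (e:Finset V) then (1:ℝ) else 0) *
      (if u ∈ (e:Finset V) then (1:ℝ) else 0) = if v ∈ (e:Finset V) then (k:ℝ) else 0 := by
    intro e
    rw [← Finset.mul_sum]
    have hcard : ∑ u, (if u ∈ (e:Finset V) then (1:ℝ) else 0) = ((e:Finset V).card : ℝ) := by
      simp [Finset.sum_ite_mem]
    rw [hcard, hunif e e.2]
    split <;> simp
  rw [Finset.sum_congr rfl fun e _ => h1 e]
  rw [Finset.sum_coe_sort E (fun e => if v ∈ e then (k:ℝ) else 0)]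
  rw [← Finset.sum_filter, Finset.sum_const, nsmul_eq_mul, mul_comm]

lemma signlessLap_symm (E : Finset (Finset V)) (u v : V) :
    signlessLap E u v = signlessLap E v u := by
  unfold signlessLap
  simp only [Matrix.mul_apply, Matrix.transpose_apply]
  exact Finset.sum_congr rfl fun e _ => mul_comm _ _

lemma deg_sum (k : ℕ) (E : Finset (Finset V)) (hunif : ∀ e ∈ E, e.card = k) :
    ∑ v, deg E v = k * E.card := by
  unfold deg
  have h1 : ∀ v : V, (E.filter fun e => v ∈ e).card = ∑ e ∈ E, if v ∈ e then 1 else 0 := by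
    intro v; rw [Finset.sum_ite, Finset.sum_const, Finset.sum_const]; simp
  simp only [h1]
  rw [Finset.sum_comm]
  have h2 : ∀ e ∈ E, (∑ v : V, if v ∈ e then 1 else 0) = k := by
    intro e he
    rw [Finset.sum_ite_mem, Finset.univ_inter, Finset.sum_const, hunif e he, smul_eq_mul, mul_one]
  rw [Finset.sum_congr rfl h2, Finset.sum_const, smul_eq_mul, mul_comm]

/-- For a connected `k`-graph with `n` vertices, `m` edges, maximum degree `Δ`
and signless Laplacian eigenpair `(ρ, x)`:
`(knΔ − k²m) x_min ≤ (kΔ − ρ) √n`, with equality iff `H` is regular. -/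
theorem xmin_maxdeg_bound {V : Type*} [Fintype V] [DecidableEq V] (k : ℕ)
    (hk : 2 ≤ k) (E : Finset (Finset V)) (hunif : ∀ e ∈ E, e.card = k)
    (hconn : HConnected E)
    (ρ : ℝ) (x : V → ℝ) (hx : Eigenpair E ρ x)
    (Δ : ℕ) (hΔ : IsGreatest (Set.range (deg E)) Δ)
    (xmin : ℝ) (hmin : IsLeast (Set.range x) xmin) :
    ((k : ℝ) * (Fintype.card V) * Δ - (k : ℝ) ^ 2 * E.card) * xmin ≤
        ((k : ℝ) * Δ - ρ) * Real.sqrt (Fintype.card V) ∧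
      (((k : ℝ) * (Fintype.card V) * Δ - (k : ℝ) ^ 2 * E.card) * xmin =
          ((k : ℝ) * Δ - ρ) * Real.sqrt (Fintype.card V) ↔ HRegular E) := by
  obtain ⟨hxpos, hxnorm, heig⟩ := hx
  haveI hVne : Nonempty V := by
    rcases isEmpty_or_nonempty V with h | h
    · rw [Finset.univ_eq_empty, Finset.sum_empty] at hxnorm; norm_num at hxnorm
    · exact h
  obtain ⟨v₀⟩ := id hVne
  have hnpos : (0:ℝ) < Fintype.card V := by
    exact_mod_cast Fintype.card_pos
  have hk0 : (0:ℝ) < k := by positivity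
  have hkne : (k:ℝ) ≠ 0 := ne_of_gt hk0
  have hxminle : ∀ v, xmin ≤ x v := fun v => hmin.2 ⟨v, rfl⟩
  have hdle : ∀ v, (deg E v : ℝ) ≤ (Δ : ℝ) := fun v => by
    exact_mod_cast hΔ.2 ⟨v, rfl⟩
  have hSpos : 0 < ∑ u, x u :=
    Finset.sum_pos (fun u _ => hxpos u) Finset.univ_nonempty
  -- eigen values identity
  have hmv : ∀ v, ∑ u, signlessLap E v u * x u = ρ * x v := by
    intro v
    have := congrFun heig v
    simpa [Matrix.mulVec, dotProduct] using this
  have hsum_eig : ∑ u, (k:ℝ) * deg E u * x u = ρ * ∑ u, x u := by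
    calc ∑ u, (k:ℝ) * deg E u * x u
        = ∑ u, (∑ v, signlessLap E u v) * x u := by
          refine Finset.sum_congr rfl fun u _ => ?_
          rw [rowSum_signlessLap k E hunif u]
      _ = ∑ u, ∑ v, signlessLap E u v * x u := by
          refine Finset.sum_congr rfl fun u _ => ?_
          rw [Finset.sum_mul]
      _ = ∑ v, ∑ u, signlessLap E u v * x u := Finset.sum_comm
      _ = ∑ v, ∑ u, signlessLap E v u * x u := by
          refine Finset.sum_congr rfl fun v _ => Finset.sum_congr rfl fun u _ => ?_
          rw [signlessLap_symm]
      _ = ∑ v, ρ * x v := Finset.sum_congr rfl fun v _ => hmv v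
      _ = ρ * ∑ v, x v := by rw [Finset.mul_sum]
  have hdegsum : (∑ v, (deg E v : ℝ)) = (k:ℝ) * E.card := by
    exact_mod_cast congrArg (Nat.cast : ℕ → ℝ) (deg_sum k E hunif)
  -- B identity and bounds
  have hB : ∑ u, ((k:ℝ)*Δ - (k:ℝ)*deg E u) * x u = ((k:ℝ)*Δ - ρ) * ∑ u, x u := by
    simp only [sub_mul]
    rw [Finset.sum_sub_distrib, ← Finset.mul_sum]
    rw [hsum_eig]
  have hA : ((k : ℝ) * (Fintype.card V) * Δ - (k : ℝ) ^ 2 * E.card)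
      = ∑ u : V, ((k:ℝ)*Δ - (k:ℝ)*deg E u) := by
    rw [Finset.sum_sub_distrib, Finset.sum_const, ← Finset.mul_sum, hdegsum,
      Finset.card_univ, nsmul_eq_mul]
    ring
  have hterm_nonneg : ∀ u : V, 0 ≤ (k:ℝ)*Δ - (k:ℝ)*deg E u := fun u => by
    have := mul_le_mul_of_nonneg_left (hdle u) (le_of_lt hk0)
    linarith
  have hAB : ((k : ℝ) * (Fintype.card V) * Δ - (k : ℝ) ^ 2 * E.card) * xmin ≤
      ∑ u, ((k:ℝ)*Δ - (k:ℝ)*deg E u) * x u := by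
    rw [hA, Finset.sum_mul]
    exact Finset.sum_le_sum fun u _ =>
      mul_le_mul_of_nonneg_left (hxminle u) (hterm_nonneg u)
  have hBnonneg : 0 ≤ ∑ u, ((k:ℝ)*Δ - (k:ℝ)*deg E u) * x u :=
    Finset.sum_nonneg fun u _ => mul_nonneg (hterm_nonneg u) (le_of_lt (hxpos u))
  have hρle : ρ ≤ (k:ℝ)*Δ := by
    by_contra h
    push_neg at h
    have : ((k:ℝ)*Δ - ρ) * ∑ u, x u < 0 :=
      mul_neg_of_neg_of_pos (by linarith) hSpos
    rw [← hB] at this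
    linarith
  have hSle : ∑ u, x u ≤ Real.sqrt (Fintype.card V) := by
    apply Real.le_sqrt_of_sq_le
    have := sq_sum_le_card_mul_sum_sq (s := Finset.univ) (f := x)
    rw [hxnorm, Finset.card_univ] at this
    simpa using this
  have hBC : ((k:ℝ)*Δ - ρ) * (∑ u, x u) ≤ ((k:ℝ)*Δ - ρ) * Real.sqrt (Fintype.card V) :=
    mul_le_mul_of_nonneg_left hSle (by linarith)
  have hineq : ((k : ℝ) * (Fintype.card V) * Δ - (k : ℝ) ^ 2 * E.card) * xmin ≤
      ((k : ℝ) * Δ - ρ) * Real.sqrt (Fintype.card V) := by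
    calc _ ≤ ∑ u, ((k:ℝ)*Δ - (k:ℝ)*deg E u) * x u := hAB
      _ = ((k:ℝ)*Δ - ρ) * ∑ u, x u := hB
      _ ≤ _ := hBC
  refine ⟨hineq, ?_, ?_⟩
  · -- equality → regular
    intro h
    by_cases hρ : ρ = (k:ℝ)*Δ
    · -- sum of nonneg terms is zero → all degrees = Δ
      have hB0 : ∑ u, ((k:ℝ)*Δ - (k:ℝ)*deg E u) * x u = 0 := by
        rw [hB, hρ]; ring
      have hall := (Finset.sum_eq_zero_iff_of_nonneg fun u _ =>
        mul_nonneg (hterm_nonneg u) (le_of_lt (hxpos u))).1 hB0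
      refine ⟨Δ, fun v => ?_⟩
      have h0 := hall v (Finset.mem_univ v)
      have h1 : (k:ℝ)*Δ - (k:ℝ)*deg E v = 0 := by
        rcases mul_eq_zero.1 h0 with h' | h'
        · exact h'
        · exact absurd h' (ne_of_gt (hxpos v))
      have h2 : (k:ℝ) * (deg E v : ℝ) = (k:ℝ) * (Δ : ℝ) := by linarith
      have h3 : (deg E v : ℝ) = (Δ : ℝ) := mul_left_cancel₀ hkne h2
      exact_mod_cast h3
    · have hρlt : ρ < (k:ℝ)*Δ := lt_of_le_of_ne hρle hρ
      have hBeq : ((k:ℝ)*Δ - ρ) * ∑ u, x u = ((k:ℝ)*Δ - ρ) * Real.sqrt (Fintype.card V) := by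
        apply le_antisymm hBC
        rw [← hB]
        calc ((k:ℝ)*Δ - ρ) * Real.sqrt (Fintype.card V)
            = ((k : ℝ) * (Fintype.card V) * Δ - (k : ℝ) ^ 2 * E.card) * xmin := h.symm
          _ ≤ _ := hAB
      have hSeq : ∑ u, x u = Real.sqrt (Fintype.card V) :=
        mul_left_cancel₀ (by linarith) hBeq
      -- x is constant
      set c : ℝ := (Real.sqrt (Fintype.card V))⁻¹ with hc
      have hsqrtpos : 0 < Real.sqrt (Fintype.card V) := Real.sqrt_pos.2 hnpos
      have hcpos : 0 < c := inv_pos.2 hsqrtpos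
      have hcsq : (Fintype.card V : ℝ) * c ^ 2 = 1 := by
        rw [hc, inv_pow, Real.sq_sqrt (le_of_lt hnpos)]
        exact mul_inv_cancel₀ (ne_of_gt hnpos)
      have hcS : 2 * c * ∑ u, x u = 2 := by
        rw [hSeq, hc]
        field_simp
      have hzero : ∑ u, (x u - c)^2 = 0 := by
        have expand : ∀ u : V, (x u - c)^2 = x u ^ 2 - 2 * c * x u + c ^ 2 := fun u => by ring
        simp only [expand]
        rw [Finset.sum_add_distrib, Finset.sum_sub_distrib, hxnorm, ← Finset.mul_sum,
          Finset.sum_const, Finset.card_univ, nsmul_eq_mul]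
        linarith [hcS, hcsq]
      have hxconst : ∀ u, x u = c := by
        intro u
        have h0 := (Finset.sum_eq_zero_iff_of_nonneg fun u _ => sq_nonneg (x u - c)).1
          hzero u (Finset.mem_univ u)
        have := pow_eq_zero_iff (n := 2) (by norm_num) |>.1 h0
        linarith [sub_eq_zero.1 this]
      have hrow : ∀ v, (k:ℝ) * deg E v = ρ := by
        intro v
        have h1 := hmv v
        simp only [hxconst] at h1
        rw [← Finset.sum_mul, rowSum_signlessLap k E hunif v] at h1
        exact mul_right_cancel₀ (ne_of_gt hcpos) h1
      refine ⟨deg E v₀, fun v => ?_⟩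
      have h2 : (k:ℝ) * deg E v = (k:ℝ) * deg E v₀ := (hrow v).trans (hrow v₀).symm
      have h3 : (deg E v : ℝ) = (deg E v₀ : ℝ) := mul_left_cancel₀ hkne h2
      exact_mod_cast h3
  · -- regular → equality
    rintro ⟨r, hr⟩
    have hrΔ : Δ = r := by
      obtain ⟨v, hv⟩ := hΔ.1
      rw [← hv, hr v]
    have hm : (k * E.card : ℕ) = Fintype.card V * r := by
      rw [← deg_sum k E hunif]
      simp [hr, Finset.card_univ, mul_comm]
    have hmr : (k:ℝ) * E.card = (Fintype.card V : ℝ) * r := by exact_mod_cast hm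
    have hcoef : (k : ℝ) * (Fintype.card V) * Δ - (k : ℝ) ^ 2 * E.card = 0 := by
      rw [hrΔ]
      have : (k:ℝ)^2 * E.card = (k:ℝ) * ((k:ℝ) * E.card) := by ring
      rw [this, hmr]
      push_cast
      ring
    have hρeq : ρ = (k:ℝ)*Δ := by
      have h1 : ∑ u, (k:ℝ) * deg E u * x u = (k:ℝ)*Δ * ∑ u, x u := by
        rw [Finset.mul_sum]
        refine Finset.sum_congr rfl fun u _ => ?_
        rw [hr u, hrΔ, mul_assoc]
      rw [hsum_eig] at h1
      exact mul_right_cancel₀ (ne_of_gt hSpos) h1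
    rw [hcoef, hρeq]
    ring
end

section
/- Let H be a non-regular connected k-uniform hypergraph with maximum degree Δ, minimum degree δ, average degree d, and signless Laplacian eigenpair (ρ, x) (so that kΔ − ρ > 0 and d − δ > 0). Then γ(H) ≥ ( (ρ − kδ)(Δ − d) ) / ( (kΔ − ρ)(d − δ) ). -/
open Finset Matrix

variable {V : Type*} [Fintype V] [DecidableEq V]

set_option linter.unusedSectionVars false in
lemma inc_col_sum (E : Finset (Finset V)) (u : V) :
    ∑ e : ↥E, inc E u e = (deg E u : ℝ) := by
  simp only [inc]
  rw [Finset.sum_coe_sort E (fun e => if u ∈ e then (1:ℝ) else 0), Finset.sum_boole, deg]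

lemma inc_row_sum (E : Finset (Finset V)) (k : ℕ) (hunif : ∀ e ∈ E, e.card = k)
    (e : ↥E) : ∑ u : V, inc E u e = (k : ℝ) := by
  have : ∑ u : V, inc E u e = ((univ.filter (fun u => u ∈ (e : Finset V))).card : ℝ) := by
    simp [inc, Finset.sum_boole]
  rw [this]
  have h2 : (univ.filter (fun u => u ∈ (e : Finset V))) = (e : Finset V) := by
    ext u; simp
  rw [h2, hunif e e.2]

lemma lap_apply (E : Finset (Finset V)) (v u : V) :
    signlessLap E v u = ∑ e : ↥E, inc E v e * inc E u e := by
  simp [signlessLap, Matrix.mul_apply, Matrix.transpose_apply]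

lemma lap_nonneg (E : Finset (Finset V)) (v u : V) : 0 ≤ signlessLap E v u := by
  rw [lap_apply]
  apply Finset.sum_nonneg
  intro e _
  unfold inc
  positivity

lemma lap_row_sum (E : Finset (Finset V)) (k : ℕ) (hunif : ∀ e ∈ E, e.card = k) (v : V) :
    ∑ u : V, signlessLap E v u = (k : ℝ) * deg E v := by
  simp only [lap_apply]
  rw [Finset.sum_comm]
  have : ∀ e : ↥E, ∑ u : V, inc E v e * inc E u e = inc E v e * (k : ℝ) := by
    intro e
    rw [← Finset.mul_sum, inc_row_sum E k hunif]
  rw [Finset.sum_congr rfl fun e _ => this e, ← Finset.sum_mul, inc_col_sum]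
  ring

lemma lap_symm (E : Finset (Finset V)) (v u : V) :
    signlessLap E v u = signlessLap E u v := by
  simp only [lap_apply]
  exact Finset.sum_congr rfl fun e _ => mul_comm _ _


set_option linter.unusedSectionVars false in
theorem lap_sum_identity {V : Type*} [Fintype V] [DecidableEq V] (k : ℕ)
    (E : Finset (Finset V)) (hunif : ∀ e ∈ E, e.card = k)
    (ρ : ℝ) (x : V → ℝ) (hpos : ∀ v, 0 < x v)
    (heig : (signlessLap E).mulVec x = ρ • x) :
    ρ * ∑ v, x v = (k : ℝ) * ∑ v, (deg E v : ℝ) * x v := by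
  have h1 : ∑ v, ((signlessLap E).mulVec x) v = ρ * ∑ v, x v := by
    rw [heig]; simp [Finset.mul_sum]
  rw [← h1]
  simp only [Matrix.mulVec, dotProduct]
  rw [Finset.sum_comm]
  rw [Finset.mul_sum]
  apply Finset.sum_congr rfl
  intro u _
  rw [← Finset.sum_mul]
  have : ∑ v, signlessLap E v u = (k:ℝ) * deg E u := by
    rw [Finset.sum_congr rfl fun v _ => lap_symm E v u, lap_row_sum E k hunif]
  rw [this]; ring


/-- For a non-regular connected `k`-graph with maximum degree `Δ`, minimum degree `δ`,
average degree `d` and signless Laplacian eigenpair `(ρ, x)`: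
`γ(H) = x_max / x_min ≥ (ρ − kδ)(Δ − d) / ((kΔ − ρ)(d − δ))`. -/
theorem gamma_lower_bound {V : Type*} [Fintype V] [DecidableEq V] (k : ℕ)
    (hk : 2 ≤ k) (E : Finset (Finset V)) (hunif : ∀ e ∈ E, e.card = k)
    (hconn : HConnected E) (hnotreg : ¬ HRegular E)
    (ρ : ℝ) (x : V → ℝ) (hx : Eigenpair E ρ x)
    (Δ δ : ℕ) (hΔ : IsGreatest (Set.range (deg E)) Δ) (hδ : IsLeast (Set.range (deg E)) δ)
    (d : ℝ) (hd : d = (∑ v, (deg E v : ℝ)) / (Fintype.card V))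
    (xmax xmin : ℝ) (hmax : IsGreatest (Set.range x) xmax)
    (hmin : IsLeast (Set.range x) xmin) :
    (ρ - (k : ℝ) * δ) * ((Δ : ℝ) - d) / (((k : ℝ) * Δ - ρ) * (d - (δ : ℝ))) ≤
      xmax / xmin := by
  obtain ⟨hpos, hnorm, heig⟩ := hx
  unfold HRegular at hnotreg
  obtain ⟨⟨vΔ, hvΔ⟩, hΔub⟩ := hΔ
  obtain ⟨⟨vδ, hvδ⟩, hδlb⟩ := hδ
  obtain ⟨⟨vM, hvM⟩, hMub⟩ := hmax
  obtain ⟨⟨vm, hvm⟩, hmlb⟩ := hmin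
  have hdegle : ∀ v, (deg E v : ℝ) ≤ Δ := fun v => by exact_mod_cast hΔub ⟨v, rfl⟩
  have hdegge : ∀ v, (δ : ℝ) ≤ deg E v := fun v => by exact_mod_cast hδlb ⟨v, rfl⟩
  have hxle : ∀ v, x v ≤ xmax := fun v => hMub ⟨v, rfl⟩
  have hxge : ∀ v, xmin ≤ x v := fun v => hmlb ⟨v, rfl⟩
  have hminpos : 0 < xmin := hvm ▸ hpos vm
  have hmaxpos : 0 < xmax := lt_of_lt_of_le hminpos (hvM ▸ hxge vM)
  -- n positive
  have : Nonempty V := ⟨vm⟩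
  have hn : (0:ℝ) < (Fintype.card V : ℝ) := by exact_mod_cast Fintype.card_pos
  -- eigen-equation pointwise
  have hQx : ∀ v, ∑ u, signlessLap E v u * x u = ρ * x v := by
    intro v
    have := congrFun heig v
    simpa [Matrix.mulVec, dotProduct, mul_comm] using this
  -- ρ ≤ kΔ
  have hρub : ρ ≤ (k:ℝ) * Δ := by
    have h1 : ρ * xmax ≤ ((k:ℝ) * Δ) * xmax := by
      calc ρ * xmax = ∑ u, signlessLap E vM u * x u := by rw [hQx vM, hvM]
        _ ≤ ∑ u, signlessLap E vM u * xmax :=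
            Finset.sum_le_sum fun u _ => mul_le_mul_of_nonneg_left (hxle u) (lap_nonneg E vM u)
        _ = ((k:ℝ) * deg E vM) * xmax := by rw [← Finset.sum_mul, lap_row_sum E k hunif]
        _ ≤ ((k:ℝ) * Δ) * xmax := by
            have hk0 : (0:ℝ) ≤ k := by positivity
            exact mul_le_mul_of_nonneg_right
              (mul_le_mul_of_nonneg_left (hdegle vM) hk0) hmaxpos.le
    exact le_of_mul_le_mul_right h1 hmaxpos
  -- kδ ≤ ρ
  have hρlb : (k:ℝ) * δ ≤ ρ := by
    have h1 : ((k:ℝ) * δ) * xmin ≤ ρ * xmin := by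
      calc ((k:ℝ) * δ) * xmin ≤ ((k:ℝ) * deg E vm) * xmin := by
            have hk0 : (0:ℝ) ≤ k := by positivity
            exact mul_le_mul_of_nonneg_right
              (mul_le_mul_of_nonneg_left (hdegge vm) hk0) hminpos.le
        _ = ∑ u, signlessLap E vm u * xmin := by rw [← Finset.sum_mul, lap_row_sum E k hunif]
        _ ≤ ∑ u, signlessLap E vm u * x u :=
            Finset.sum_le_sum fun u _ => mul_le_mul_of_nonneg_left (hxge u) (lap_nonneg E vm u)
        _ = ρ * xmin := by rw [hQx vm, hvm]
    exact le_of_mul_le_mul_right h1 hminpos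
  -- sum identity
  have hsum : ρ * ∑ v, x v = (k : ℝ) * ∑ v, (deg E v : ℝ) * x v :=
    lap_sum_identity k E hunif ρ x hpos heig
  -- average degree facts
  have hSd : ∑ v, (deg E v : ℝ) = (Fintype.card V : ℝ) * d := by
    rw [hd]; field_simp
  have hdδ : (δ:ℝ) < d := by
    push_neg at hnotreg
    obtain ⟨w, hw⟩ := hnotreg δ
    have hlt : (δ:ℝ) < deg E w := lt_of_le_of_ne (hdegge w) (by exact_mod_cast (Ne.symm hw))
    have : (Fintype.card V : ℝ) * δ < ∑ v, (deg E v : ℝ) := by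
      calc (Fintype.card V : ℝ) * δ = ∑ _v : V, (δ:ℝ) := by
            rw [Finset.sum_const, Finset.card_univ]; ring
        _ < ∑ v, (deg E v : ℝ) :=
            Finset.sum_lt_sum (fun v _ => hdegge v) ⟨w, Finset.mem_univ w, hlt⟩
    rw [hSd] at this
    exact lt_of_mul_lt_mul_left this hn.le
  -- key combination
  set a : ℝ := (k:ℝ) * Δ - ρ with ha_def
  set b : ℝ := ρ - (k:ℝ) * δ with hb_def
  have ha : 0 ≤ a := by simp [ha_def]; linarith
  have hb : 0 ≤ b := by simp [hb_def]; linarith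
  have hzero : ∑ v, ((k:ℝ) * deg E v - ρ) * x v = 0 := by
    have : ∑ v, ((k:ℝ) * deg E v - ρ) * x v
        = (k : ℝ) * ∑ v, (deg E v : ℝ) * x v - ρ * ∑ v, x v := by
      rw [Finset.mul_sum, Finset.mul_sum, ← Finset.sum_sub_distrib]
      exact Finset.sum_congr rfl fun v _ => by ring
    rw [this, ← hsum]; ring
  have heq : a * ∑ v, ((deg E v : ℝ) - δ) * x v = b * ∑ v, ((Δ:ℝ) - deg E v) * x v := by
    have h1 : a * (∑ v, ((deg E v : ℝ) - δ) * x v) - b * (∑ v, ((Δ:ℝ) - deg E v) * x v)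
        = ((Δ:ℝ) - δ) * ∑ v, ((k:ℝ) * deg E v - ρ) * x v := by
      rw [Finset.mul_sum, Finset.mul_sum, Finset.mul_sum, ← Finset.sum_sub_distrib]
      exact Finset.sum_congr rfl fun v _ => by simp only [ha_def, hb_def]; ring
    rw [hzero, mul_zero] at h1
    linarith
  have h1 : b * (xmin * ∑ v, ((Δ:ℝ) - deg E v)) ≤ b * ∑ v, ((Δ:ℝ) - deg E v) * x v := by
    apply mul_le_mul_of_nonneg_left _ hb
    rw [Finset.mul_sum]
    apply Finset.sum_le_sum
    intro v _
    have h := mul_le_mul_of_nonneg_left (hxge v) (sub_nonneg.2 (hdegle v))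
    linarith
  have h2 : a * ∑ v, ((deg E v : ℝ) - δ) * x v ≤ a * (xmax * ∑ v, ((deg E v : ℝ) - δ)) := by
    apply mul_le_mul_of_nonneg_left _ ha
    rw [Finset.mul_sum]
    apply Finset.sum_le_sum
    intro v _
    have h := mul_le_mul_of_nonneg_left (hxle v) (sub_nonneg.2 (hdegge v))
    linarith
  have hS1 : ∑ v, ((Δ:ℝ) - deg E v) = (Fintype.card V : ℝ) * ((Δ:ℝ) - d) := by
    rw [Finset.sum_sub_distrib, hSd, Finset.sum_const, Finset.card_univ]; ring
  have hS2 : ∑ v, ((deg E v : ℝ) - δ) = (Fintype.card V : ℝ) * (d - δ) := by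
    rw [Finset.sum_sub_distrib, hSd, Finset.sum_const, Finset.card_univ]; ring
  rw [hS1] at h1; rw [hS2] at h2
  have hchain : b * (xmin * ((Fintype.card V : ℝ) * ((Δ:ℝ) - d)))
      ≤ a * (xmax * ((Fintype.card V : ℝ) * (d - δ))) := by linarith
  have key : b * ((Δ:ℝ) - d) * xmin ≤ a * (d - (δ:ℝ)) * xmax := by
    have h3 : (Fintype.card V : ℝ) * (b * ((Δ:ℝ) - d) * xmin)
        ≤ (Fintype.card V : ℝ) * (a * (d - (δ:ℝ)) * xmax) := by nlinarith [hchain]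
    exact le_of_mul_le_mul_left h3 hn
  rcases eq_or_lt_of_le ha with haz | hapos
  · rw [← haz, zero_mul, div_zero]
    positivity
  · rw [div_le_div_iff₀ (mul_pos hapos (by linarith)) hminpos]
    nlinarith [key]
end

section
/- Let H be a connected k-uniform hypergraph with at least one edge, maximum degree Δ, minimum degree δ, and signless Laplacian eigenpair (ρ, x). Then γ(H) ≥ max{ kΔ/ρ , ρ/(kδ) } ≥ √(Δ/δ), and γ(H) = √(Δ/δ) holds if and only if H is regular. -/
open Finset Matrix

variable {V : Type*} [Fintype V] [DecidableEq V]

set_option linter.unusedSectionVars false in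
lemma forcing_le {α : Type*} (s : Finset α) (f : α → ℝ) (c : ℝ)
    (hle : ∀ i ∈ s, f i ≤ c) (h : (s.card : ℝ) * c ≤ ∑ i ∈ s, f i) :
    ∀ i ∈ s, f i = c := by
  by_contra hcon
  push_neg at hcon
  obtain ⟨i0, hi0, hne⟩ := hcon
  have hlt : f i0 < c := lt_of_le_of_ne (hle _ hi0) hne
  have := Finset.sum_lt_sum hle ⟨i0, hi0, hlt⟩
  rw [Finset.sum_const, nsmul_eq_mul] at this
  linarith

lemma forcing_ge {α : Type*} (s : Finset α) (f : α → ℝ) (c : ℝ)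
    (hge : ∀ i ∈ s, c ≤ f i) (h : ∑ i ∈ s, f i ≤ (s.card : ℝ) * c) :
    ∀ i ∈ s, f i = c := by
  have key := forcing_le s (fun i => -f i) (-c) (fun i hi => neg_le_neg (hge i hi))
    (by rw [Finset.sum_neg_distrib]; linarith)
  intro i hi
  simpa using congrArg Neg.neg (key i hi)

lemma mulVec_apply' (E : Finset (Finset V)) (x : V → ℝ) (v : V) :
    (signlessLap E).mulVec x v = ∑ e ∈ E.filter (fun e => v ∈ e), ∑ w ∈ e, x w := by
  classical
  have h1 : (signlessLap E).mulVec x v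
      = ∑ w, ∑ e : ↥E, inc E v e * inc E w e * x w := by
    simp [signlessLap, mulVec, dotProduct, mul_apply, transpose_apply, Finset.sum_mul]
  have h2 : ∀ e : ↥E, (∑ w, inc E v e * inc E w e * x w)
      = if v ∈ (e : Finset V) then ∑ w ∈ (e : Finset V), x w else 0 := by
    intro e
    by_cases hv : v ∈ (e : Finset V) <;>
      simp [inc, hv, ite_mul, Finset.sum_ite_mem, Finset.univ_inter]
  rw [h1, Finset.sum_comm]
  simp_rw [h2]
  rw [Finset.sum_coe_sort E (fun e => if v ∈ e then ∑ w ∈ e, x w else 0), Finset.sum_filter]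

lemma exists_mem_edge (E : Finset (Finset V)) (hconn : HConnected E) (hE : E.Nonempty)
    (hne : ∀ e ∈ E, e.Nonempty) (v : V) : ∃ e ∈ E, v ∈ e := by
  obtain ⟨e0, he0⟩ := hE
  obtain ⟨u, hu⟩ := hne e0 he0
  induction hconn u v with
  | refl => exact ⟨e0, he0, hu⟩
  | tail _ hstep _ =>
      obtain ⟨_, e, he, _, hb⟩ := hstep
      exact ⟨e, he, hb⟩

lemma propagate (E : Finset (Finset V)) (hconn : HConnected E) (P : V → Prop)
    (hstep : ∀ a b, a ≠ b → ∀ e ∈ E, a ∈ e → b ∈ e → P a → P b)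
    (v0 : V) (h0 : P v0) (v : V) : P v := by
  induction hconn v0 v with
  | refl => exact h0
  | tail _ hs ih =>
      obtain ⟨hne, e, he, ha, hb⟩ := hs
      exact hstep _ _ hne e he ha hb ih

set_option maxHeartbeats 2000000 in
/-- For a connected `k`-graph with at least one edge, maximum degree `Δ`, minimum
degree `δ` and signless Laplacian eigenpair `(ρ, x)`:
`γ(H) ≥ max {kΔ/ρ, ρ/(kδ)} ≥ √(Δ/δ)`, and `γ(H) = √(Δ/δ)` iff `H` is regular. -/
theorem gamma_ge_max_ge_sqrt {V : Type*} [Fintype V] [DecidableEq V] (k : ℕ)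
    (hk : 2 ≤ k) (E : Finset (Finset V)) (hunif : ∀ e ∈ E, e.card = k)
    (hconn : HConnected E) (hE : E.Nonempty)
    (ρ : ℝ) (x : V → ℝ) (hx : Eigenpair E ρ x)
    (Δ δ : ℕ) (hΔ : IsGreatest (Set.range (deg E)) Δ) (hδ : IsLeast (Set.range (deg E)) δ)
    (xmax xmin : ℝ) (hmax : IsGreatest (Set.range x) xmax)
    (hmin : IsLeast (Set.range x) xmin) :
    (max ((k : ℝ) * Δ / ρ) (ρ / ((k : ℝ) * δ)) ≤ xmax / xmin) ∧
    (Real.sqrt ((Δ : ℝ) / δ) ≤ max ((k : ℝ) * Δ / ρ) (ρ / ((k : ℝ) * δ))) ∧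
    (xmax / xmin = Real.sqrt ((Δ : ℝ) / δ) ↔ HRegular E) := by
  classical
  obtain ⟨hxpos, -, heigvec⟩ := hx
  -- basic positivity facts
  have hxmin_le : ∀ w, xmin ≤ x w := fun w => hmin.2 ⟨w, rfl⟩
  have hxmax_ge : ∀ w, x w ≤ xmax := fun w => hmax.2 ⟨w, rfl⟩
  have hxminpos : 0 < xmin := by
    obtain ⟨v0, hv0⟩ := hmin.1
    exact hv0 ▸ hxpos v0
  have hxmaxpos : 0 < xmax := by
    obtain ⟨v0, hv0⟩ := hmax.1
    exact hv0 ▸ lt_of_lt_of_le hxminpos (hxmin_le v0)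
  have hne : ∀ e ∈ E, e.Nonempty := by
    intro e he
    rw [← Finset.card_pos, hunif e he]; omega
  have hdegpos : ∀ v, 0 < deg E v := by
    intro v
    obtain ⟨e, he, hv⟩ := exists_mem_edge E hconn hE hne v
    exact Finset.card_pos.mpr ⟨e, Finset.mem_filter.mpr ⟨he, hv⟩⟩
  have hδpos : 0 < δ := by
    obtain ⟨v, hv⟩ := hδ.1
    exact hv ▸ hdegpos v
  have hδΔ : δ ≤ Δ := by
    obtain ⟨v, hv⟩ := hδ.1
    exact hv ▸ hΔ.2 ⟨v, rfl⟩
  have hΔpos : 0 < Δ := lt_of_lt_of_le hδpos hδΔ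
  have hkpos : (0:ℝ) < k := by exact_mod_cast Nat.lt_of_lt_of_le Nat.zero_lt_two hk
  -- eigen equation
  have heig : ∀ v, ρ * x v = ∑ e ∈ E.filter (fun e => v ∈ e), ∑ w ∈ e, x w := by
    intro v
    have := congrFun heigvec v
    rw [mulVec_apply'] at this
    simpa using this.symm
  have hinner_lb : ∀ e ∈ E, (k : ℝ) * xmin ≤ ∑ w ∈ e, x w := by
    intro e he
    have := Finset.card_nsmul_le_sum e x xmin (fun w _ => hxmin_le w)
    rwa [hunif e he, nsmul_eq_mul] at this
  have hinner_ub : ∀ e ∈ E, ∑ w ∈ e, x w ≤ (k : ℝ) * xmax := by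
    intro e he
    have := Finset.sum_le_card_nsmul e x xmax (fun w _ => hxmax_ge w)
    rwa [hunif e he, nsmul_eq_mul] at this
  have hlow : ∀ v, (deg E v : ℝ) * ((k : ℝ) * xmin) ≤ ρ * x v := by
    intro v
    rw [heig v]
    have := Finset.card_nsmul_le_sum (E.filter (fun e => v ∈ e)) (fun e => ∑ w ∈ e, x w)
      ((k : ℝ) * xmin) (fun e he => hinner_lb e (Finset.mem_filter.mp he).1)
    rwa [nsmul_eq_mul] at this
  have hup : ∀ v, ρ * x v ≤ (deg E v : ℝ) * ((k : ℝ) * xmax) := by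
    intro v
    rw [heig v]
    have := Finset.sum_le_card_nsmul (E.filter (fun e => v ∈ e)) (fun e => ∑ w ∈ e, x w)
      ((k : ℝ) * xmax) (fun e he => hinner_ub e (Finset.mem_filter.mp he).1)
    rwa [nsmul_eq_mul] at this
  have hρpos : 0 < ρ := by
    obtain ⟨v0, hv0⟩ := hmin.1
    have h1 := hlow v0
    have h2 : (0:ℝ) < (deg E v0 : ℝ) * ((k : ℝ) * xmin) := by
      have := hdegpos v0
      positivity
    have h3 : 0 < ρ * x v0 := lt_of_lt_of_le h2 h1
    nlinarith [hxpos v0]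
  -- first inequality: kΔ/ρ ≤ xmax/xmin
  have key1 : (k : ℝ) * Δ * xmin ≤ ρ * xmax := by
    obtain ⟨v, hv⟩ := hΔ.1
    have h1 := hlow v
    rw [hv] at h1
    have h2 : ρ * x v ≤ ρ * xmax := mul_le_mul_of_nonneg_left (hxmax_ge v) hρpos.le
    nlinarith
  have ineq1 : (k : ℝ) * Δ / ρ ≤ xmax / xmin := by
    rw [div_le_div_iff₀ hρpos hxminpos]
    nlinarith
  have key2 : ρ * xmin ≤ (k : ℝ) * δ * xmax := by
    obtain ⟨v, hv⟩ := hδ.1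
    have h1 := hup v
    rw [hv] at h1
    have h2 : ρ * xmin ≤ ρ * x v := mul_le_mul_of_nonneg_left (hxmin_le v) hρpos.le
    nlinarith
  have hkδpos : (0:ℝ) < (k : ℝ) * δ := by
    have : (0:ℝ) < (δ:ℝ) := by exact_mod_cast hδpos
    positivity
  have hΔposR : (0:ℝ) < (Δ:ℝ) := by exact_mod_cast hΔpos
  have hδposR : (0:ℝ) < (δ:ℝ) := by exact_mod_cast hδpos
  have ineq2 : ρ / ((k : ℝ) * δ) ≤ xmax / xmin := by
    rw [div_le_div_iff₀ hkδpos hxminpos]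
    nlinarith
  have hapos : (0:ℝ) < (k : ℝ) * Δ / ρ := by positivity
  have hbpos : (0:ℝ) < ρ / ((k : ℝ) * δ) := by positivity
  have hab : ((k : ℝ) * Δ / ρ) * (ρ / ((k : ℝ) * δ)) = (Δ : ℝ) / δ := by
    field_simp
  -- second inequality
  have ineq3 : Real.sqrt ((Δ : ℝ) / δ) ≤ max ((k : ℝ) * Δ / ρ) (ρ / ((k : ℝ) * δ)) := by
    set a := (k : ℝ) * Δ / ρ
    set b := ρ / ((k : ℝ) * δ)
    have h1 : a ≤ max a b := le_max_left a b
    have h2 : b ≤ max a b := le_max_right a b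
    have h3 : (Δ : ℝ) / δ ≤ (max a b) ^ 2 := by
      rw [← hab]; nlinarith
    calc Real.sqrt ((Δ : ℝ) / δ) ≤ Real.sqrt ((max a b) ^ 2) := Real.sqrt_le_sqrt h3
      _ = max a b := Real.sqrt_sq (le_trans hapos.le h1)
  refine ⟨max_le ineq1 ineq2, ineq3, ?_, ?_⟩
  · -- forward: equality implies regular
    intro hrat
    have hs2 : Real.sqrt ((Δ : ℝ) / δ) ^ 2 = (Δ : ℝ) / δ := Real.sq_sqrt (by positivity)
    have hsnn : 0 ≤ Real.sqrt ((Δ : ℝ) / δ) := Real.sqrt_nonneg _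
    have ha_le : (k : ℝ) * Δ / ρ ≤ Real.sqrt ((Δ : ℝ) / δ) := hrat ▸ ineq1
    have hb_le : ρ / ((k : ℝ) * δ) ≤ Real.sqrt ((Δ : ℝ) / δ) := hrat ▸ ineq2
    have ha_eq : (k : ℝ) * Δ / ρ = Real.sqrt ((Δ : ℝ) / δ) :=
      le_antisymm ha_le (by nlinarith)
    have hratio_eq : (k : ℝ) * Δ / ρ = xmax / xmin := by rw [ha_eq, ← hrat]
    rw [div_eq_div_iff hρpos.ne' hxminpos.ne'] at hratio_eq
    obtain ⟨v, hv⟩ := hΔ.1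
    have h1 := hlow v
    rw [hv] at h1
    have h2 : ρ * x v ≤ ρ * xmax := mul_le_mul_of_nonneg_left (hxmax_ge v) hρpos.le
    have hxveq : ρ * x v = (Δ : ℝ) * ((k : ℝ) * xmin) := le_antisymm (by nlinarith) h1
    have hcard : (((E.filter (fun e => v ∈ e)).card : ℕ) : ℝ) = (Δ : ℝ) := by
      rw [show (E.filter (fun e => v ∈ e)).card = deg E v from rfl, hv]
    have hsum_eq : ∑ e ∈ E.filter (fun e => v ∈ e), ∑ w ∈ e, x w
        = (((E.filter (fun e => v ∈ e)).card : ℕ) : ℝ) * ((k : ℝ) * xmin) := by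
      rw [hcard, ← heig v, hxveq]
    obtain ⟨e, he⟩ := Finset.card_pos.mp (show 0 < (E.filter (fun e => v ∈ e)).card from hdegpos v)
    have hinner_eq : ∑ w ∈ e, x w = (k : ℝ) * xmin :=
      forcing_ge _ _ _ (fun e' he' => hinner_lb e' (Finset.mem_filter.mp he').1)
        hsum_eq.le e he
    have heE := Finset.mem_filter.mp he
    have hxv_min : x v = xmin := by
      refine forcing_ge e x xmin (fun w _ => hxmin_le w) ?_ v heE.2
      rw [hunif e heE.1, hinner_eq]
    have hxv_max : x v = xmax := by
      have : ρ * x v = ρ * xmax := by nlinarith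
      exact mul_left_cancel₀ hρpos.ne' this
    have hmm : xmax = xmin := by rw [← hxv_max, hxv_min]
    have hone : Real.sqrt ((Δ : ℝ) / δ) = 1 := by
      rw [← hrat, hmm, div_self hxminpos.ne']
    have hΔδ : Δ = δ := by
      have h9 : (Δ : ℝ) / δ = 1 := by rw [← hs2, hone]; norm_num
      field_simp at h9
      exact_mod_cast h9
    refine ⟨δ, fun u => le_antisymm ?_ (hδ.2 ⟨u, rfl⟩)⟩
    exact hΔδ ▸ hΔ.2 ⟨u, rfl⟩
  · -- backward: regular implies equality
    intro hreg
    obtain ⟨r, hr⟩ := hreg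
    have hΔr : Δ = r := by obtain ⟨v, hv⟩ := hΔ.1; rw [← hv, hr v]
    have hδr : δ = r := by obtain ⟨v, hv⟩ := hδ.1; rw [← hv, hr v]
    have hsq1 : Real.sqrt ((Δ : ℝ) / δ) = 1 := by
      rw [hΔr, hδr, div_self (by exact_mod_cast (hδr ▸ hδpos).ne' : ((r : ℝ)) ≠ 0),
        Real.sqrt_one]
    have hrposR : (0 : ℝ) < (r : ℝ) := by exact_mod_cast hΔr ▸ hΔpos
    obtain ⟨vM, hvM⟩ := hmax.1
    have h1 := hup vM
    rw [hr vM, hvM] at h1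
    obtain ⟨vm, hvm⟩ := hmin.1
    have h2 := hlow vm
    rw [hr vm, hvm] at h2
    have hρ : ρ = (k : ℝ) * r := le_antisymm (by nlinarith) (by nlinarith)
    have hall : ∀ u, x u = xmax := by
      refine propagate E hconn (fun u => x u = xmax) ?_ vM hvM
      intro a b _ e he ha hb hPa
      have hcard : (((E.filter (fun e' => a ∈ e')).card : ℕ) : ℝ) = (r : ℝ) := by
        rw [show (E.filter (fun e' => a ∈ e')).card = deg E a from rfl, hr a]
      have hsum_eq : ∑ e' ∈ E.filter (fun e' => a ∈ e'), ∑ w ∈ e', x w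
          = (((E.filter (fun e' => a ∈ e')).card : ℕ) : ℝ) * ((k : ℝ) * xmax) := by
        rw [hcard, ← heig a, hPa, hρ]; ring
      have houter : ∑ w ∈ e, x w = (k : ℝ) * xmax :=
        forcing_le _ _ _ (fun e' he' => hinner_ub e' (Finset.mem_filter.mp he').1)
          hsum_eq.ge e (Finset.mem_filter.mpr ⟨he, ha⟩)
      refine forcing_le e x xmax (fun w _ => hxmax_ge w) ?_ b hb
      rw [hunif e he, houter]
    have hmm : xmin = xmax := by rw [← hvm, hall vm]
    rw [hmm, div_self hxmaxpos.ne', hsq1]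
end

section
/- Let H be a connected k-uniform hypergraph with at least one edge, minimum degree δ, and signless Laplacian eigenpair (ρ, x). Then k·x_min ≤ x(min) ≤ (ρ/δ)·x_min. Moreover, if H is regular then both inequalities are equalities. -/
open Finset Matrix

variable {V : Type*} [Fintype V] [DecidableEq V]

lemma signlessLap_mulVec_apply (E : Finset (Finset V)) (x : V → ℝ) (w : V) :
    (signlessLap E).mulVec x w = ∑ e ∈ E.filter (fun e => w ∈ e), ∑ v ∈ e, x v := by
  classical
  unfold signlessLap
  simp only [Matrix.mulVec, Matrix.mul_apply, dotProduct, Matrix.transpose_apply, inc,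
    Finset.sum_mul, ite_mul, one_mul, zero_mul, mul_ite, mul_one, mul_zero]
  rw [Finset.sum_comm]
  have h1 : ∀ e : ↥E, (∑ v : V, if v ∈ (e : Finset V) then if w ∈ (e : Finset V) then x v else 0 else 0)
      = if w ∈ (e : Finset V) then ∑ v ∈ (e : Finset V), x v else 0 := by
    intro e
    by_cases h : w ∈ (e : Finset V) <;> simp [h, Finset.sum_ite_mem]
  simp only [h1]
  conv_rhs => rw [Finset.sum_filter,
    ← Finset.sum_attach E (fun e => if w ∈ e then ∑ v ∈ e, x v else 0)]
  rw [Finset.attach_eq_univ]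

lemma deg_pos_of_conn (E : Finset (Finset V)) (k : ℕ) (hk : 2 ≤ k)
    (hunif : ∀ e ∈ E, e.card = k) (hconn : HConnected E) (hE : E.Nonempty)
    (u : V) : 0 < deg E u := by
  classical
  obtain ⟨e, he⟩ := hE
  have hcard := hunif e he
  have hne : e.Nonempty := by rw [← Finset.card_pos, hcard]; omega
  obtain ⟨w, hw⟩ := hne
  rcases (hconn u w).cases_head with h | ⟨c, ⟨hne', e', he', hue', _⟩, _⟩
  · subst h
    exact Finset.card_pos.mpr ⟨e, Finset.mem_filter.mpr ⟨he, hw⟩⟩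
  · exact Finset.card_pos.mpr ⟨e', Finset.mem_filter.mpr ⟨he', hue'⟩⟩

/-- For a connected `k`-graph with at least one edge, minimum degree `δ` and signless
Laplacian eigenpair `(ρ, x)`: `k x_min ≤ x(min) ≤ (ρ/δ) x_min`; if `H` is regular
both are equalities. -/
theorem edge_min_bounds {V : Type*} [Fintype V] [DecidableEq V] (k : ℕ)
    (hk : 2 ≤ k) (E : Finset (Finset V)) (hunif : ∀ e ∈ E, e.card = k)
    (hconn : HConnected E) (hE : E.Nonempty)
    (ρ : ℝ) (x : V → ℝ) (hx : Eigenpair E ρ x)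
    (δ : ℕ) (hδ : IsLeast (Set.range (deg E)) δ)
    (xmin : ℝ) (hmin : IsLeast (Set.range x) xmin)
    (xemin : ℝ) (hemin : IsLeast ((fun e : Finset V => ∑ v ∈ e, x v) '' ↑E) xemin) :
    ((k : ℝ) * xmin ≤ xemin ∧ xemin ≤ ρ / (δ : ℝ) * xmin) ∧
      (HRegular E → (k : ℝ) * xmin = xemin ∧ xemin = ρ / (δ : ℝ) * xmin) := by
  classical
  obtain ⟨hpos, hnorm, heig⟩ := hx
  obtain ⟨u, hu⟩ := hmin.1
  have hxm : ∀ v, xmin ≤ x v := fun v => hmin.2 ⟨v, rfl⟩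
  have hxminpos : 0 < xmin := hu ▸ hpos u
  obtain ⟨e0, he0E, he0⟩ := hemin.1
  have heminle : ∀ e ∈ E, xemin ≤ ∑ v ∈ e, x v := fun e he => hemin.2 ⟨e, he, rfl⟩
  have hSlow : ∀ e ∈ E, (k : ℝ) * xmin ≤ ∑ v ∈ e, x v := by
    intro e he
    have h := Finset.card_nsmul_le_sum e x xmin (fun v _ => hxm v)
    rwa [hunif e he, nsmul_eq_mul] at h
  have h1 : (k : ℝ) * xmin ≤ xemin := he0 ▸ hSlow e0 he0E
  have hkpos : (0:ℝ) < k := by positivity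
  have hxeminpos : 0 < xemin := lt_of_lt_of_le (by positivity) h1
  have hkey : ∀ w, ρ * x w = ∑ e ∈ E.filter (fun e => w ∈ e), ∑ v ∈ e, x v := by
    intro w
    have h := congrFun heig w
    rw [signlessLap_mulVec_apply E x w] at h
    simpa using h.symm
  have hdegpos : ∀ w, 0 < deg E w := deg_pos_of_conn E k hk hunif hconn hE
  obtain ⟨v0, hv0⟩ := hδ.1
  have hδpos : 0 < δ := hv0 ▸ hdegpos v0
  have hδle : ∀ w, δ ≤ deg E w := fun w => hδ.2 ⟨w, rfl⟩
  have hρxmin : (δ : ℝ) * xemin ≤ ρ * xmin := by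
    have hc1 : ((E.filter (fun e => u ∈ e)).card : ℝ) * xemin
        ≤ ∑ e ∈ E.filter (fun e => u ∈ e), ∑ v ∈ e, x v := by
      have h := Finset.card_nsmul_le_sum (E.filter (fun e => u ∈ e))
        (fun e => ∑ v ∈ e, x v) xemin
        (fun e he => heminle e (Finset.mem_filter.mp he).1)
      rwa [nsmul_eq_mul] at h
    have hcd : (E.filter (fun e => u ∈ e)).card = deg E u := rfl
    have hδd : (δ : ℝ) ≤ ((E.filter (fun e => u ∈ e)).card : ℝ) := by
      rw [hcd]; exact_mod_cast hδle u
    calc (δ : ℝ) * xemin ≤ ((E.filter (fun e => u ∈ e)).card : ℝ) * xemin :=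
          mul_le_mul_of_nonneg_right hδd hxeminpos.le
      _ ≤ ∑ e ∈ E.filter (fun e => u ∈ e), ∑ v ∈ e, x v := hc1
      _ = ρ * xmin := by rw [← hkey u, hu]
  have hδRpos : (0:ℝ) < δ := by exact_mod_cast hδpos
  have h2 : xemin ≤ ρ / (δ : ℝ) * xmin := by
    rw [div_mul_eq_mul_div, le_div_iff₀ hδRpos]
    linarith
  refine ⟨⟨h1, h2⟩, ?_⟩
  rintro ⟨r, hr⟩
  have hδr : δ = r := by rw [← hv0, hr]
  have : Nonempty V := ⟨u⟩
  obtain ⟨z, hz⟩ := Finite.exists_max x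
  have hSup : ∀ e ∈ E, (∑ v ∈ e, x v) ≤ (k : ℝ) * x z := by
    intro e he
    have h := Finset.sum_le_card_nsmul e x (x z) (fun v _ => hz v)
    rwa [hunif e he, nsmul_eq_mul] at h
  have hle : ρ * x z ≤ (r : ℝ) * ((k : ℝ) * x z) := by
    rw [hkey z]
    have h := Finset.sum_le_card_nsmul (E.filter (fun e => z ∈ e))
      (fun e => ∑ v ∈ e, x v) ((k : ℝ) * x z)
      (fun e he => hSup e (Finset.mem_filter.mp he).1)
    rw [nsmul_eq_mul] at h
    have hc : (E.filter (fun e => z ∈ e)).card = r := hr z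
    rwa [hc] at h
  have hge : (r : ℝ) * ((k : ℝ) * xmin) ≤ ρ * xmin := by
    have hc1 := Finset.card_nsmul_le_sum (E.filter (fun e => u ∈ e))
      (fun e => ∑ v ∈ e, x v) ((k : ℝ) * xmin)
      (fun e he => hSlow e (Finset.mem_filter.mp he).1)
    rw [nsmul_eq_mul] at hc1
    have hc : (E.filter (fun e => u ∈ e)).card = r := hr u
    rw [hc] at hc1
    calc (r : ℝ) * ((k : ℝ) * xmin) ≤ ∑ e ∈ E.filter (fun e => u ∈ e), ∑ v ∈ e, x v := hc1
      _ = ρ * xmin := by rw [← hkey u, hu]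
  have hxz : 0 < x z := hpos z
  have hρle : ρ ≤ (r : ℝ) * k := by nlinarith
  have hρge : (r : ℝ) * k ≤ ρ := by nlinarith
  have hρ : ρ = (r : ℝ) * k := le_antisymm hρle hρge
  have hrpos : (0:ℝ) < (r : ℝ) := by rw [← hδr] at *; exact hδRpos
  have hdiv : ρ / (δ : ℝ) = (k : ℝ) := by
    rw [hρ, hδr]; field_simp
  have hfirst : (k : ℝ) * xmin = xemin := by
    refine le_antisymm h1 ?_
    calc xemin ≤ ρ / (δ : ℝ) * xmin := h2
      _ = (k : ℝ) * xmin := by rw [hdiv]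
  exact ⟨hfirst, by rw [← hfirst, hdiv]⟩
end

section
/- Let H be a connected k-uniform hypergraph with at least one edge and signless Laplacian eigenpair (ρ, x). Then Γ(H) = 1 if and only if there is a constant c such that for every edge e ∈ E the sum of the degrees of its vertices satisfies ∑_{v∈e} d(v) = c. -/
open Finset Matrix

variable {V : Type*} [Fintype V] [DecidableEq V]

lemma Qrow (E : Finset (Finset V)) (x : V → ℝ) (v : V) :
    (signlessLap E).mulVec x v = ∑ e ∈ E.filter (fun e => v ∈ e), ∑ u ∈ e, x u := by
  classical
  simp only [signlessLap, Matrix.mulVec, Matrix.mul_apply, dotProduct, transpose_apply, inc]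
  simp only [Finset.sum_mul]
  rw [Finset.sum_comm]
  rw [Finset.sum_filter, ← Finset.sum_coe_sort E]
  refine Finset.sum_congr rfl fun e _ => ?_
  by_cases hv : v ∈ (e : Finset V)
  · simp only [hv, if_true, one_mul, ite_mul, zero_mul]
    rw [Finset.sum_ite_mem, Finset.univ_inter]
  · simp [hv]

lemma swap_sum (E : Finset (Finset V)) (x y : V → ℝ) :
    ∑ v, y v * ∑ e ∈ E.filter (fun e => v ∈ e), ∑ u ∈ e, x u
      = ∑ e ∈ E, (∑ v ∈ e, y v) * (∑ u ∈ e, x u) := by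
  classical
  have h : ∀ v : V, y v * ∑ e ∈ E.filter (fun e => v ∈ e), ∑ u ∈ e, x u
      = ∑ e ∈ E, if v ∈ e then y v * ∑ u ∈ e, x u else 0 := by
    intro v
    rw [Finset.mul_sum, Finset.sum_filter]
  rw [Finset.sum_congr rfl fun v _ => h v, Finset.sum_comm]
  refine Finset.sum_congr rfl fun e _ => ?_
  rw [Finset.sum_ite_mem, Finset.univ_inter, Finset.sum_mul]

/-- For a connected `k`-graph with at least one edge and signless Laplacian eigenpair
`(ρ, x)`: `Γ(H) = 1` iff the sum of the degrees of the vertices of an edge is the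
same constant for every edge. -/
theorem Gamma_eq_one_iff {V : Type*} [Fintype V] [DecidableEq V] (k : ℕ)
    (hk : 2 ≤ k) (E : Finset (Finset V)) (hunif : ∀ e ∈ E, e.card = k)
    (hconn : HConnected E) (hE : E.Nonempty)
    (ρ : ℝ) (x : V → ℝ) (hx : Eigenpair E ρ x)
    (xemax xemin : ℝ)
    (hemax : IsGreatest ((fun e : Finset V => ∑ v ∈ e, x v) '' ↑E) xemax)
    (hemin : IsLeast ((fun e : Finset V => ∑ v ∈ e, x v) '' ↑E) xemin) :
    xemax / xemin = 1 ↔ ∃ c : ℕ, ∀ e ∈ E, ∑ v ∈ e, deg E v = c := by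
  classical
  obtain ⟨hxpos, hxnorm, heig⟩ := hx
  have key : ∀ v, ∑ e ∈ E.filter (fun e => v ∈ e), ∑ u ∈ e, x u = ρ * x v := by
    intro v
    rw [← Qrow E x v, heig]
    simp [smul_eq_mul]
  have hene : ∀ e ∈ E, (e : Finset V).Nonempty := fun e he =>
    Finset.card_pos.mp (by rw [hunif e he]; omega)
  have hSpos : ∀ e ∈ E, 0 < ∑ u ∈ e, x u := fun e he =>
    Finset.sum_pos (fun u _ => hxpos u) (hene e he)
  obtain ⟨emin, heminE, heminval⟩ := hemin.1
  have heminE' : emin ∈ E := heminE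
  have hminpos : 0 < xemin := heminval ▸ hSpos emin heminE'
  have hdegpos : ∀ v e, e ∈ E → v ∈ e → 0 < deg E v := fun v e he hv =>
    Finset.card_pos.mpr ⟨e, Finset.mem_filter.mpr ⟨he, hv⟩⟩
  obtain ⟨e0, he0⟩ := hE
  obtain ⟨v0, hv0⟩ := hene e0 he0
  have hdegall : ∀ v : V, 0 < deg E v := by
    intro v
    by_cases h : v ∈ e0
    · exact hdegpos v e0 he0 h
    · have hne : v ≠ v0 := fun h' => h (h' ▸ hv0)
      rcases (hconn v v0).cases_head with h' | ⟨b, ⟨-, e, he, hve, -⟩, -⟩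
      · exact absurd h' hne
      · exact hdegpos v e he hve
  constructor
  · intro hratio
    have hmaxmin : xemax = xemin := (div_eq_one_iff_eq (ne_of_gt hminpos)).mp hratio
    have hall : ∀ e ∈ E, ∑ u ∈ e, x u = xemin := by
      intro e he
      have h1 : xemin ≤ ∑ u ∈ e, x u := hemin.2 ⟨e, he, rfl⟩
      have h2 : ∑ u ∈ e, x u ≤ xemax := hemax.2 ⟨e, he, rfl⟩
      linarith
    have hxv : ∀ v, ρ * x v = (deg E v : ℝ) * xemin := by
      intro v
      rw [← key v,
        Finset.sum_congr rfl (fun e he => hall e (Finset.mem_filter.mp he).1),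
        Finset.sum_const, nsmul_eq_mul]
      rfl
    have hval : ∀ e ∈ E, ((∑ v ∈ e, deg E v : ℕ) : ℝ) * xemin = ρ * xemin := by
      intro e he
      calc ((∑ v ∈ e, deg E v : ℕ) : ℝ) * xemin
          = ∑ v ∈ e, (deg E v : ℝ) * xemin := by push_cast; rw [Finset.sum_mul]
        _ = ∑ v ∈ e, ρ * x v := Finset.sum_congr rfl fun v _ => (hxv v).symm
        _ = ρ * ∑ u ∈ e, x u := by rw [Finset.mul_sum]
        _ = ρ * xemin := by rw [hall e he]
    refine ⟨∑ v ∈ e0, deg E v, fun e he => ?_⟩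
    have := mul_right_cancel₀ (ne_of_gt hminpos)
      ((hval e he).trans (hval e0 he0).symm)
    exact_mod_cast this
  · rintro ⟨c, hc⟩
    set y : V → ℝ := fun v => (deg E v : ℝ) with hy
    have hypos : ∀ v, 0 < y v := fun v => by
      simpa [hy] using (show (0:ℝ) < (deg E v : ℝ) from Nat.cast_pos.mpr (hdegall v))
    have keyy : ∀ v, ∑ e ∈ E.filter (fun e => v ∈ e), ∑ u ∈ e, y u = (c : ℝ) * y v := by
      intro v
      have h : ∀ e ∈ E.filter (fun e => v ∈ e), (∑ u ∈ e, y u) = (c : ℝ) := by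
        intro e he
        have he' := (Finset.mem_filter.mp he).1
        simp only [hy]
        rw [← Nat.cast_sum, hc e he']
      rw [Finset.sum_congr rfl h, Finset.sum_const, nsmul_eq_mul]
      simp only [hy, deg]
      ring
    have hip : 0 < ∑ v, x v * y v :=
      Finset.sum_pos (fun v _ => mul_pos (hxpos v) (hypos v)) ⟨v0, Finset.mem_univ v0⟩
    have hρc : ρ = (c : ℝ) := by
      have hcalc : ρ * ∑ v, x v * y v = (c : ℝ) * ∑ v, x v * y v := by
        calc ρ * ∑ v, x v * y v
            = ∑ v, y v * (ρ * x v) := by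
              rw [Finset.mul_sum]; exact Finset.sum_congr rfl fun v _ => by ring
          _ = ∑ v, y v * ∑ e ∈ E.filter (fun e => v ∈ e), ∑ u ∈ e, x u :=
              Finset.sum_congr rfl fun v _ => by rw [key v]
          _ = ∑ e ∈ E, (∑ v ∈ e, y v) * (∑ u ∈ e, x u) := swap_sum E x y
          _ = ∑ e ∈ E, (∑ v ∈ e, x v) * (∑ u ∈ e, y u) :=
              Finset.sum_congr rfl fun e _ => mul_comm _ _
          _ = ∑ v, x v * ∑ e ∈ E.filter (fun e => v ∈ e), ∑ u ∈ e, y u :=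
              (swap_sum E y x).symm
          _ = ∑ v, x v * ((c : ℝ) * y v) :=
              Finset.sum_congr rfl fun v _ => by rw [keyy v]
          _ = (c : ℝ) * ∑ v, x v * y v := by
              rw [Finset.mul_sum]; exact Finset.sum_congr rfl fun v _ => by ring
      exact mul_right_cancel₀ (ne_of_gt hip) hcalc
    obtain ⟨w, -, hw⟩ := Finset.exists_min_image Finset.univ (fun v => x v / y v)
      ⟨v0, Finset.mem_univ v0⟩
    set t := x w / y w with ht
    have htnn : ∀ v, t * y v ≤ x v := fun v =>
      (le_div_iff₀ (hypos v)).mp (hw v (Finset.mem_univ v))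
    have base : x w = t * y w := by
      rw [ht, div_mul_cancel₀ _ (ne_of_gt (hypos w))]
    have step : ∀ a b : V, x a = t * y a →
        (a ≠ b ∧ ∃ e ∈ E, a ∈ e ∧ b ∈ e) → x b = t * y b := by
      rintro a b ha ⟨-, e, he, hae, hbe⟩
      have hza : ∑ e' ∈ E.filter (fun e' => a ∈ e'), ∑ u ∈ e', (x u - t * y u) = 0 := by
        have hsplit : ∑ e' ∈ E.filter (fun e' => a ∈ e'), ∑ u ∈ e', (x u - t * y u)
            = (∑ e' ∈ E.filter (fun e' => a ∈ e'), ∑ u ∈ e', x u)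
              - t * ∑ e' ∈ E.filter (fun e' => a ∈ e'), ∑ u ∈ e', y u := by
          rw [Finset.mul_sum, ← Finset.sum_sub_distrib]
          exact Finset.sum_congr rfl fun e' _ => by
            rw [Finset.sum_sub_distrib, Finset.mul_sum]
        rw [hsplit, key a, keyy a, ha, hρc]; ring
      have hterm : ∀ e' ∈ E.filter (fun e' => a ∈ e'),
          (0:ℝ) ≤ ∑ u ∈ e', (x u - t * y u) :=
        fun e' _ => Finset.sum_nonneg fun u _ => sub_nonneg.mpr (htnn u)
      have hSz := (Finset.sum_eq_zero_iff_of_nonneg hterm).mp hza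
      have heF : e ∈ E.filter (fun e' => a ∈ e') := Finset.mem_filter.mpr ⟨he, hae⟩
      have hzb := (Finset.sum_eq_zero_iff_of_nonneg
        (fun u _ => sub_nonneg.mpr (htnn u))).mp (hSz e heF) b hbe
      linarith
    have hprop : ∀ v, x v = t * y v := by
      intro v
      have mono : ∀ {a b : V},
          Relation.ReflTransGen (fun a b => a ≠ b ∧ ∃ e ∈ E, a ∈ e ∧ b ∈ e) a b →
          x a = t * y a → x b = t * y b := by
        intro a b h
        induction h with
        | refl => exact id
        | tail h1 h2 ih => exact fun ha => step _ _ (ih ha) h2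
      exact mono (hconn w v) base
    have hSe : ∀ e ∈ E, ∑ u ∈ e, x u = t * c := by
      intro e he
      calc ∑ u ∈ e, x u = ∑ u ∈ e, t * y u := Finset.sum_congr rfl fun u _ => hprop u
        _ = t * ∑ u ∈ e, y u := by rw [Finset.mul_sum]
        _ = t * c := by simp only [hy]; rw [← Nat.cast_sum, hc e he]
    obtain ⟨emax, hemaxE, hemaxval⟩ := hemax.1
    have h1 : xemax = t * c := hemaxval ▸ hSe emax hemaxE
    have h2 : xemin = t * c := heminval ▸ hSe emin heminE'
    rw [h1, ← h2, div_self (ne_of_gt hminpos)]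
end

section
/- Let H be a connected k-uniform hypergraph with at least one edge and signless Laplacian eigenpair (ρ, x). Then min_{e∈E} ∑_{v∈e} d(v) ≤ ρ ≤ max_{e∈E} ∑_{v∈e} d(v). Moreover, equality holds in either inequality if and only if H is edge-regular, i.e. the sum ∑_{v∈e} d(v) is the same for every edge e ∈ E. -/
open Finset Matrix

variable {V : Type*} [Fintype V] [DecidableEq V]

def yvec (E : Finset (Finset V)) (x : V → ℝ) : ↥E → ℝ := fun e => ∑ v ∈ (e:Finset V), x v
def cmat (E : Finset (Finset V)) : ↥E → ↥E → ℝ := fun e f => (((e:Finset V)) ∩ (f:Finset V)).card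

lemma incL_apply (E : Finset (Finset V)) (e f : ↥E) :
    ((inc E)ᵀ * inc E) e f = cmat E e f := by
  simp only [Matrix.mul_apply, Matrix.transpose_apply, inc, ite_mul, one_mul, zero_mul,
    ← ite_and, cmat]
  rw [Finset.sum_boole]
  congr 2
  ext v; simp

lemma yvec_eq (E : Finset (Finset V)) (x : V → ℝ) (e : ↥E) :
    ((inc E)ᵀ.mulVec x) e = yvec E x e := by
  simp [Matrix.mulVec, dotProduct, inc, Matrix.transpose_apply, ite_mul, Finset.sum_ite_mem,
    yvec]

lemma cmat_rowsum (E : Finset (Finset V)) (e : ↥E) :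
    ∑ f : ↥E, cmat E e f = ∑ v ∈ (e:Finset V), (deg E v : ℝ) := by
  have h : ∀ f : ↥E, cmat E e f
      = ∑ v ∈ (e:Finset V), if v ∈ (f:Finset V) then (1:ℝ) else 0 := by
    intro f
    rw [Finset.sum_boole]; congr 1
  simp only [h]
  rw [Finset.sum_comm]
  refine Finset.sum_congr rfl fun v _ => ?_
  rw [Finset.sum_coe_sort E (fun f => if v ∈ f then (1:ℝ) else 0), Finset.sum_boole]
  rfl

lemma key_id (E : Finset (Finset V)) (ρ : ℝ) (x : V → ℝ)
    (heig : (signlessLap E).mulVec x = ρ • x) (e : ↥E) :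
    ρ * yvec E x e = ∑ f : ↥E, cmat E e f * yvec E x f := by
  have hL : ((inc E)ᵀ * inc E).mulVec ((inc E)ᵀ.mulVec x) = ρ • ((inc E)ᵀ.mulVec x) := by
    have hQ : inc E * (inc E)ᵀ = signlessLap E := rfl
    rw [Matrix.mulVec_mulVec, Matrix.mul_assoc, ← Matrix.mulVec_mulVec, hQ, heig,
      Matrix.mulVec_smul]
  have := congrFun hL e
  rw [Matrix.mulVec, dotProduct] at this
  simp only [incL_apply, yvec_eq, Pi.smul_apply, smul_eq_mul] at this
  rw [← this]

/-- For a connected `k`-graph with at least one edge and signless Laplacian eigenpair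
`(ρ, x)`: `min_{e∈E} ∑_{v∈e} d(v) ≤ ρ ≤ max_{e∈E} ∑_{v∈e} d(v)`, and equality holds
in either inequality iff the sum `∑_{v∈e} d(v)` is the same for every edge. -/
theorem rho_between_edge_degree_sums {V : Type*} [Fintype V] [DecidableEq V] (k : ℕ)
    (hk : 2 ≤ k) (E : Finset (Finset V)) (hunif : ∀ e ∈ E, e.card = k)
    (hconn : HConnected E) (hE : E.Nonempty)
    (ρ : ℝ) (x : V → ℝ) (hx : Eigenpair E ρ x) :
    ((E.inf' hE fun e => ∑ v ∈ e, (deg E v : ℝ)) ≤ ρ ∧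
        ρ ≤ E.sup' hE fun e => ∑ v ∈ e, (deg E v : ℝ)) ∧
      ((E.inf' hE fun e => ∑ v ∈ e, (deg E v : ℝ)) = ρ ↔
        ∃ c : ℕ, ∀ e ∈ E, ∑ v ∈ e, deg E v = c) ∧
      (ρ = (E.sup' hE fun e => ∑ v ∈ e, (deg E v : ℝ)) ↔
        ∃ c : ℕ, ∀ e ∈ E, ∑ v ∈ e, deg E v = c) := by
  classical
  obtain ⟨hxpos, -, heig⟩ := hx
  haveI : Nonempty ↥E := ⟨⟨hE.choose, hE.choose_spec⟩⟩
  set y : ↥E → ℝ := yvec E x with hy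
  set R : ↥E → ℝ := fun e => ∑ v ∈ (e:Finset V), (deg E v : ℝ) with hRdef
  set Rsup : ℝ := E.sup' hE fun e => ∑ v ∈ e, (deg E v : ℝ) with hRsup
  set Rinf : ℝ := E.inf' hE fun e => ∑ v ∈ e, (deg E v : ℝ) with hRinf
  have key : ∀ e : ↥E, ρ * y e = ∑ f : ↥E, cmat E e f * y f := key_id E ρ x heig
  have hrow : ∀ e : ↥E, ∑ f : ↥E, cmat E e f = R e := cmat_rowsum E
  have hene : ∀ e : ↥E, ((e : Finset V)).Nonempty := fun e =>
    Finset.card_pos.mp (by rw [hunif e e.2]; omega)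
  have hypos : ∀ e : ↥E, 0 < y e := fun e =>
    Finset.sum_pos (fun v _ => hxpos v) (hene e)
  have hcnn : ∀ e f : ↥E, 0 ≤ cmat E e f := fun e f => Nat.cast_nonneg _
  have hRleSup : ∀ e : ↥E, R e ≤ Rsup := fun e =>
    Finset.le_sup' (fun e => ∑ v ∈ e, (deg E v : ℝ)) e.2
  have hInfleR : ∀ e : ↥E, Rinf ≤ R e := fun e =>
    Finset.inf'_le (fun e => ∑ v ∈ e, (deg E v : ℝ)) e.2
  obtain ⟨e₀, -, hmax'⟩ := Finset.exists_max_image (Finset.univ : Finset ↥E) y Finset.univ_nonempty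
  obtain ⟨e₁, -, hmin'⟩ := Finset.exists_min_image (Finset.univ : Finset ↥E) y Finset.univ_nonempty
  have hmax : ∀ f : ↥E, y f ≤ y e₀ := fun f => hmax' f (Finset.mem_univ f)
  have hmin : ∀ f : ↥E, y e₁ ≤ y f := fun f => hmin' f (Finset.mem_univ f)
  -- the two bounds
  have hub : ρ ≤ Rsup := by
    have h1 : ρ * y e₀ ≤ Rsup * y e₀ := by
      calc ρ * y e₀ = ∑ f : ↥E, cmat E e₀ f * y f := key e₀
        _ ≤ ∑ f : ↥E, cmat E e₀ f * y e₀ :=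
          Finset.sum_le_sum fun f _ => mul_le_mul_of_nonneg_left (hmax f) (hcnn e₀ f)
        _ = R e₀ * y e₀ := by rw [← Finset.sum_mul, hrow]
        _ ≤ Rsup * y e₀ := mul_le_mul_of_nonneg_right (hRleSup e₀) (hypos e₀).le
    exact le_of_mul_le_mul_right h1 (hypos e₀)
  have hlb : Rinf ≤ ρ := by
    have h1 : Rinf * y e₁ ≤ ρ * y e₁ := by
      calc Rinf * y e₁ ≤ R e₁ * y e₁ := mul_le_mul_of_nonneg_right (hInfleR e₁) (hypos e₁).le
        _ = ∑ f : ↥E, cmat E e₁ f * y e₁ := by rw [← Finset.sum_mul, hrow]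
        _ ≤ ∑ f : ↥E, cmat E e₁ f * y f :=
          Finset.sum_le_sum fun f _ => mul_le_mul_of_nonneg_left (hmin f) (hcnn e₁ f)
        _ = ρ * y e₁ := (key e₁).symm
    exact le_of_mul_le_mul_right h1 (hypos e₁)
  -- constant y implies edge-regularity
  have regular_of : (∀ f g : ↥E, y f = y g) → ∃ c : ℕ, ∀ e ∈ E, ∑ v ∈ e, deg E v = c := by
    intro hall
    have hRρ : ∀ e : ↥E, R e = ρ := by
      intro e
      have h1 := key e
      have h2 : ∑ f : ↥E, cmat E e f * y f = R e * y e := by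
        rw [← hrow e, Finset.sum_mul]
        exact Finset.sum_congr rfl fun f _ => by rw [hall f e]
      rw [h2] at h1
      exact mul_right_cancel₀ (ne_of_gt (hypos e)) h1.symm
    obtain ⟨a, ha⟩ := hE
    refine ⟨∑ v ∈ a, deg E v, fun e he => ?_⟩
    have h1 : ((∑ v ∈ e, deg E v : ℕ) : ℝ) = ((∑ v ∈ a, deg E v : ℕ) : ℝ) := by
      push_cast
      have := (hRρ ⟨e, he⟩).trans (hRρ ⟨a, ha⟩).symm
      simpa [hRdef] using this
    exact_mod_cast h1
  -- propagation lemmas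
  have propSup : ρ = Rsup → ∀ e : ↥E, y e = y e₀ →
      ∀ f : ↥E, (((e : Finset V)) ∩ (f : Finset V)).Nonempty → y f = y e₀ := by
    intro hρ e he f hef
    have hsum : ∑ f' : ↥E, cmat E e f' * (y e₀ - y f') = (R e - ρ) * y e₀ := by
      rw [Finset.sum_congr rfl fun f' _ => mul_sub (cmat E e f') (y e₀) (y f'),
        Finset.sum_sub_distrib, ← Finset.sum_mul, hrow, ← key e, he]
      ring
    have hle : (R e - ρ) * y e₀ ≤ 0 :=
      mul_nonpos_of_nonpos_of_nonneg (by have := hRleSup e; linarith [hρ ▸ this]) (hypos e₀).le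
    have hnn : ∀ f' ∈ (Finset.univ : Finset ↥E), 0 ≤ cmat E e f' * (y e₀ - y f') :=
      fun f' _ => mul_nonneg (hcnn e f') (by linarith [hmax f'])
    have hzero : ∀ f' ∈ (Finset.univ : Finset ↥E), cmat E e f' * (y e₀ - y f') = 0 := by
      rw [← Finset.sum_eq_zero_iff_of_nonneg hnn]
      exact le_antisymm (hsum ▸ hle) (Finset.sum_nonneg hnn)
    have hcpos : (0:ℝ) < cmat E e f := by
      have : 0 < (((e : Finset V)) ∩ (f : Finset V)).card := Finset.card_pos.mpr hef
      unfold cmat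
      exact_mod_cast this
    have := hzero f (Finset.mem_univ f)
    rcases mul_eq_zero.mp this with h | h
    · exact absurd h (ne_of_gt hcpos)
    · linarith
  have propInf : ρ = Rinf → ∀ e : ↥E, y e = y e₁ →
      ∀ f : ↥E, (((e : Finset V)) ∩ (f : Finset V)).Nonempty → y f = y e₁ := by
    intro hρ e he f hef
    have hsum : ∑ f' : ↥E, cmat E e f' * (y f' - y e₁) = (ρ - R e) * y e₁ := by
      rw [Finset.sum_congr rfl fun f' _ => mul_sub (cmat E e f') (y f') (y e₁),
        Finset.sum_sub_distrib, ← Finset.sum_mul, hrow, ← key e, he]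
      ring
    have hle : (ρ - R e) * y e₁ ≤ 0 :=
      mul_nonpos_of_nonpos_of_nonneg (by have := hInfleR e; linarith [hρ ▸ this]) (hypos e₁).le
    have hnn : ∀ f' ∈ (Finset.univ : Finset ↥E), 0 ≤ cmat E e f' * (y f' - y e₁) :=
      fun f' _ => mul_nonneg (hcnn e f') (by linarith [hmin f'])
    have hzero : ∀ f' ∈ (Finset.univ : Finset ↥E), cmat E e f' * (y f' - y e₁) = 0 := by
      rw [← Finset.sum_eq_zero_iff_of_nonneg hnn]
      exact le_antisymm (hsum ▸ hle) (Finset.sum_nonneg hnn)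
    have hcpos : (0:ℝ) < cmat E e f := by
      have : 0 < (((e : Finset V)) ∩ (f : Finset V)).card := Finset.card_pos.mpr hef
      unfold cmat
      exact_mod_cast this
    have := hzero f (Finset.mem_univ f)
    rcases mul_eq_zero.mp this with h | h
    · exact absurd h (ne_of_gt hcpos)
    · linarith
  -- connectivity propagation
  have spread : ∀ e' : ↥E, (∀ e : ↥E, y e = y e' →
      ∀ f : ↥E, (((e : Finset V)) ∩ (f : Finset V)).Nonempty → y f = y e') →
      ∀ g : ↥E, y g = y e' := by
    intro e' prop g
    obtain ⟨v₀, hv₀⟩ := hene e'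
    obtain ⟨w, hw⟩ := hene g
    have step : ∀ u : V, Relation.ReflTransGen
        (fun a b => a ≠ b ∧ ∃ e ∈ E, a ∈ e ∧ b ∈ e) v₀ u →
        ∀ f : ↥E, u ∈ (f : Finset V) → y f = y e' := by
      intro u hu
      induction hu with
      | refl =>
        intro f hf
        exact prop e' rfl f ⟨v₀, Finset.mem_inter.mpr ⟨hv₀, hf⟩⟩
      | tail h₁ h₂ ih =>
        obtain ⟨-, e'', he''E, hbe'', hce''⟩ := h₂
        intro f hf
        exact prop ⟨e'', he''E⟩ (ih ⟨e'', he''E⟩ hbe'') f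
          ⟨_, Finset.mem_inter.mpr ⟨hce'', hf⟩⟩
    exact step w (hconn v₀ w) g hw
  -- backward direction: edge-regular implies both equalities
  have back : (∃ c : ℕ, ∀ e ∈ E, ∑ v ∈ e, deg E v = c) → Rinf = ρ ∧ ρ = Rsup := by
    rintro ⟨c0, hc0⟩
    have hfc : ∀ e ∈ E, (∑ v ∈ e, (deg E v : ℝ)) = (c0 : ℝ) := by
      intro e he
      rw [← hc0 e he]
      push_cast
      rfl
    obtain ⟨a, ha⟩ := hE
    have hsupc : Rsup = (c0 : ℝ) :=
      le_antisymm (by rw [hRsup]; exact Finset.sup'_le _ _ fun e he => (hfc e he).le)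
        ((hfc a ha).symm.le.trans (by rw [hRsup]; exact Finset.le_sup' (fun e => ∑ v ∈ e, (deg E v : ℝ)) ha))
    have hinfc : Rinf = (c0 : ℝ) :=
      le_antisymm ((by rw [hRinf]; exact Finset.inf'_le (fun e => ∑ v ∈ e, (deg E v : ℝ)) ha : Rinf ≤ _).trans (hfc a ha).le)
        (by rw [hRinf]; exact Finset.le_inf' _ _ fun e he => (hfc e he).ge)
    have : ρ = (c0 : ℝ) := le_antisymm (hsupc ▸ hub) (hinfc ▸ hlb)
    exact ⟨hinfc.trans this.symm, this.trans hsupc.symm⟩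
  refine ⟨⟨hlb, hub⟩, ⟨?_, ?_⟩, ?_, ?_⟩
  · intro h
    have hall := spread e₁ (propInf h.symm)
    exact regular_of fun f g => (hall f).trans (hall g).symm
  · intro h; exact (back h).1
  · intro h
    have hall := spread e₀ (propSup h)
    exact regular_of fun f g => (hall f).trans (hall g).symm
  · intro h; exact (back h).2
end
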